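/- arXiv:0705.2878 — 4 statements merged into one kernel-verified Lean document; each statement's English description precedes it below -/
import Mathlib

section
/- Let σ > 0, let (n_1,…,n_I) be a solution of (FP_σ), and set S^σ := −σ ln(Σ_{i=1}^I n_i). Then for every x ∈ [0,1], (S^σ)'(x) = (Σ_{i=1}^I ψ_i'(x) n_i(x)) / (Σ_{i=1}^I n_i(x)), and consequently the total flux estimate holds: min_{1≤i≤I} ψ_i'(x) ≤ (S^σ)'(x) ≤ max_{1≤i≤I} ψ_i'(x) for every x ∈ [0,1]. -/
open Real Set MeasureTheory Filter

/-- A solution of the Fokker–Planck system (FP_σ): `n i` are C², strictly positive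
on `[0,1]`, satisfy the elliptic system in `(0,1)` and the zero-flux boundary
conditions at `0` and `1`. -/
def IsFPSolution {I : ℕ} (ψ : Fin I → ℝ → ℝ) (ν : Fin I → Fin I → ℝ)
    (σ : ℝ) (n : Fin I → ℝ → ℝ) : Prop :=
  (∀ i, ContDiff ℝ 2 (n i)) ∧
  (∀ i, ∀ x ∈ Set.Icc (0:ℝ) 1, 0 < n i x) ∧
  (∀ i, ∀ x ∈ Set.Ioo (0:ℝ) 1,
    -σ * deriv (deriv (n i)) x - deriv (fun y => deriv (ψ i) y * n i y) x
      + ν i i * n i x = ∑ j ∈ Finset.univ.filter (· ≠ i), ν i j * n j x) ∧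
  (∀ i, ∀ x ∈ ({0, 1} : Set ℝ), σ * deriv (n i) x + deriv (ψ i) x * n i x = 0)

/-- Formula and bounds (total flux estimate) for the derivative of
`S^σ = -σ log (∑ i, n i)`. -/
theorem fp_total_flux_estimate {I : ℕ} [NeZero I]
    (ψ : Fin I → ℝ → ℝ) (ν : Fin I → Fin I → ℝ)
    (hψ : ∀ i, ContDiff ℝ 2 (ψ i))
    (hψL : ∀ i, ∃ L : NNReal, LipschitzOnWith L (deriv (deriv (ψ i))) (Set.Icc 0 1))
    (hν : ∀ i j, i ≠ j → 0 < ν i j)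
    (hνd : ∀ i, ν i i = ∑ j ∈ Finset.univ.filter (· ≠ i), ν j i)
    (σ : ℝ) (hσ : 0 < σ) (n : Fin I → ℝ → ℝ)
    (hn : IsFPSolution ψ ν σ n) :
    ∀ x ∈ Set.Icc (0:ℝ) 1,
      deriv (fun y => -σ * Real.log (∑ i, n i y)) x
          = (∑ i, deriv (ψ i) x * n i x) / (∑ i, n i x) ∧
        (⨅ i, deriv (ψ i) x) ≤ deriv (fun y => -σ * Real.log (∑ i, n i y)) x ∧
        deriv (fun y => -σ * Real.log (∑ i, n i y)) x ≤ ⨆ i, deriv (ψ i) x := by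
  obtain ⟨hC2, hpos, hPDE, hBC⟩ := hn
  have hne : Nonempty (Fin I) := Fin.pos_iff_nonempty.mp (Nat.pos_of_ne_zero (NeZero.ne I))
  -- basic differentiability
  have hdn : ∀ i, Differentiable ℝ (n i) := fun i => (hC2 i).differentiable two_ne_zero
  have hdn' : ∀ i, Differentiable ℝ (deriv (n i)) := by
    intro i
    have h2 : ContDiff ℝ ((1:ℕ)+1) (n i) := by exact_mod_cast hC2 i
    exact ((contDiff_succ_iff_deriv.mp h2).2.2).differentiable (by simp)
  have hdψ' : ∀ i, Differentiable ℝ (deriv (ψ i)) := by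
    intro i
    have h2 : ContDiff ℝ ((1:ℕ)+1) (ψ i) := by exact_mod_cast hψ i
    exact ((contDiff_succ_iff_deriv.mp h2).2.2).differentiable (by simp)
  -- the total flux J
  set g : Fin I → ℝ → ℝ := fun i y => σ * deriv (n i) y + deriv (ψ i) y * n i y with hg
  set J : ℝ → ℝ := fun y => ∑ i, g i y with hJdef
  have hgdiff : ∀ i, Differentiable ℝ (g i) := fun i =>
    ((hdn' i).const_mul σ).add ((hdψ' i).mul (hdn i))
  have hJdiff : Differentiable ℝ J := Differentiable.fun_sum fun i _ => hgdiff i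
  have hJderiv : ∀ x, deriv J x
      = ∑ i, (σ * deriv (deriv (n i)) x + deriv (fun y => deriv (ψ i) y * n i y) x) := by
    intro x
    rw [hJdef]
    rw [deriv_fun_sum (fun i _ => (hgdiff i).differentiableAt)]
    refine Finset.sum_congr rfl fun i _ => ?_
    rw [hg]
    rw [deriv_fun_add ((hdn' i).differentiableAt.const_mul σ)
      ((hdψ' i).differentiableAt.fun_mul (hdn i).differentiableAt),
      deriv_const_mul σ (hdn' i).differentiableAt]
  have hswap : ∀ x, (∑ i, ∑ j ∈ Finset.univ.filter (· ≠ i), ν j i * n i x)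
      = ∑ i, ∑ j ∈ Finset.univ.filter (· ≠ i), ν i j * n j x := by
    intro x
    simp only [Finset.sum_filter]
    rw [Finset.sum_comm]
    exact Finset.sum_congr rfl fun i _ => Finset.sum_congr rfl fun j _ => if_congr ne_comm rfl rfl
  have hJ'0 : ∀ x ∈ Set.Ioo (0:ℝ) 1, deriv J x = 0 := by
    intro x hx
    rw [hJderiv x]
    have : ∀ i, σ * deriv (deriv (n i)) x + deriv (fun y => deriv (ψ i) y * n i y) x
        = ν i i * n i x - ∑ j ∈ Finset.univ.filter (· ≠ i), ν i j * n j x := by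
      intro i; have := hPDE i x hx; linarith
    rw [Finset.sum_congr rfl fun i _ => this i, Finset.sum_sub_distrib]
    have : ∑ i, ν i i * n i x = ∑ i, ∑ j ∈ Finset.univ.filter (· ≠ i), ν j i * n i x := by
      refine Finset.sum_congr rfl fun i _ => ?_
      rw [hνd i, Finset.sum_mul]
    rw [this, hswap x, sub_self]
  -- J vanishes on [0,1]
  have hJ0 : J 0 = 0 := by
    rw [hJdef]
    refine Finset.sum_eq_zero fun i _ => ?_
    exact hBC i 0 (by simp)
  have hJzero : ∀ x ∈ Set.Icc (0:ℝ) 1, J x = 0 := by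
    intro x hx
    have hmono : MonotoneOn J (Set.Icc (0:ℝ) 1) := by
      refine monotoneOn_of_deriv_nonneg (convex_Icc 0 1) hJdiff.continuous.continuousOn
        (hJdiff.differentiableOn) ?_
      intro y hy
      rw [interior_Icc] at hy
      rw [hJ'0 y hy]
    have hanti : AntitoneOn J (Set.Icc (0:ℝ) 1) := by
      refine antitoneOn_of_deriv_nonpos (convex_Icc 0 1) hJdiff.continuous.continuousOn
        (hJdiff.differentiableOn) ?_
      intro y hy
      rw [interior_Icc] at hy
      rw [hJ'0 y hy]
    have h0 : (0:ℝ) ∈ Set.Icc (0:ℝ) 1 := by norm_num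
    have h1 := hmono h0 hx hx.1
    have h2 := hanti h0 hx hx.1
    rw [hJ0] at h1 h2
    linarith
  -- main computation
  intro x hx
  have hNx : 0 < ∑ i, n i x := Finset.sum_pos (fun i _ => hpos i x hx) Finset.univ_nonempty
  have hNd : HasDerivAt (fun y => ∑ i, n i y) (∑ i, deriv (n i) x) x :=
    HasDerivAt.fun_sum fun i _ => (hdn i x).hasDerivAt
  have hlog : HasDerivAt (fun y => -σ * Real.log (∑ i, n i y))
      (-σ * ((∑ i, deriv (n i) x) / (∑ i, n i x))) x :=
    ((hNd.log hNx.ne').const_mul (-σ))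
  have hder : deriv (fun y => -σ * Real.log (∑ i, n i y)) x
      = -σ * ((∑ i, deriv (n i) x) / (∑ i, n i x)) := hlog.deriv
  have hkey : -σ * (∑ i, deriv (n i) x) = ∑ i, deriv (ψ i) x * n i x := by
    have hs : J x = σ * (∑ i, deriv (n i) x) + ∑ i, deriv (ψ i) x * n i x := by
      simp only [hJdef, hg, Finset.mul_sum, ← Finset.sum_add_distrib]
    have := hJzero x hx
    rw [hs] at this
    linarith
  have hform : deriv (fun y => -σ * Real.log (∑ i, n i y)) x
      = (∑ i, deriv (ψ i) x * n i x) / (∑ i, n i x) := by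
    rw [hder, ← hkey, mul_div_assoc']
  refine ⟨hform, ?_, ?_⟩
  · rw [hform, le_div_iff₀ hNx]
    calc (⨅ i, deriv (ψ i) x) * ∑ i, n i x = ∑ i, (⨅ j, deriv (ψ j) x) * n i x := by
          rw [Finset.mul_sum]
      _ ≤ ∑ i, deriv (ψ i) x * n i x := by
          refine Finset.sum_le_sum fun i _ => ?_
          exact mul_le_mul_of_nonneg_right
            (ciInf_le (f := fun j => deriv (ψ j) x) (Set.Finite.bddBelow (Set.finite_range _)) i) (hpos i x hx).le
  · rw [hform, div_le_iff₀ hNx]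
    calc ∑ i, deriv (ψ i) x * n i x ≤ ∑ i, (⨆ j, deriv (ψ j) x) * n i x := by
          refine Finset.sum_le_sum fun i _ => ?_
          exact mul_le_mul_of_nonneg_right
            (le_ciSup (f := fun j => deriv (ψ j) x) (Set.Finite.bddAbove (Set.finite_range _)) i) (hpos i x hx).le
      _ = (⨆ i, deriv (ψ i) x) * ∑ i, n i x := by rw [Finset.mul_sum]
end

section
/- Let σ > 0 and let (n_1,…,n_I) be a solution of (FP_σ). Then for each i = 1,…,I the phase function R_i := −σ ln n_i satisfies the uniform gradient bound sup_{x∈[0,1]} |R_i'(x)| ≤ max_{x∈[0,1]} |ψ_i'(x)| + √(σ · max_{x∈[0,1]} |ν_ii − ψ_i''(x)|). -/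
open Real Set MeasureTheory Filter

private lemma contDiff_one_deriv_aux (f : ℝ → ℝ) (hf : ContDiff ℝ 2 f) :
    ContDiff ℝ 1 (deriv f) := by
  have : (2 : WithTop ℕ∞) = 1 + 1 := by norm_num
  rw [this] at hf
  exact (contDiff_succ_iff_deriv.mp hf).2.2

/-- Uniform gradient bound for the phase functions `R i = -σ log (n i)`. -/
theorem fp_gradient_bound {I : ℕ} [NeZero I]
    (ψ : Fin I → ℝ → ℝ) (ν : Fin I → Fin I → ℝ)
    (hψ : ∀ i, ContDiff ℝ 2 (ψ i))
    (hψL : ∀ i, ∃ L : NNReal, LipschitzOnWith L (deriv (deriv (ψ i))) (Set.Icc 0 1))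
    (hν : ∀ i j, i ≠ j → 0 < ν i j)
    (hνd : ∀ i, ν i i = ∑ j ∈ Finset.univ.filter (· ≠ i), ν j i)
    (σ : ℝ) (hσ : 0 < σ) (n : Fin I → ℝ → ℝ)
    (hn : IsFPSolution ψ ν σ n) :
    ∀ i, ∀ x ∈ Set.Icc (0:ℝ) 1,
      |deriv (fun y => -σ * Real.log (n i y)) x| ≤
        (⨆ y : Set.Icc (0:ℝ) 1, |deriv (ψ i) y|)
          + Real.sqrt (σ * ⨆ y : Set.Icc (0:ℝ) 1, |ν i i - deriv (deriv (ψ i)) y|) := by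
  obtain ⟨hC2, hpos, hPDE, hBC⟩ := hn
  intro i x hx
  -- basic smoothness facts
  have hnC1' : ContDiff ℝ 1 (deriv (n i)) := contDiff_one_deriv_aux _ (hC2 i)
  have hψC1' : ContDiff ℝ 1 (deriv (ψ i)) := contDiff_one_deriv_aux _ (hψ i)
  have hn_diff : Differentiable ℝ (n i) := (hC2 i).differentiable (by norm_num)
  have hn'_diff : Differentiable ℝ (deriv (n i)) := hnC1'.differentiable (by norm_num)
  have hψ'_diff : Differentiable ℝ (deriv (ψ i)) := hψC1'.differentiable (by norm_num)
  have hn'_cont : Continuous (deriv (n i)) := hn'_diff.continuous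
  have hψ'_cont : Continuous (deriv (ψ i)) := hψ'_diff.continuous
  have hψ''_cont : Continuous (deriv (deriv (ψ i))) := hψC1'.continuous_deriv le_rfl
  have hn_cont : Continuous (n i) := hn_diff.continuous
  -- the suprema
  set A := ⨆ y : Set.Icc (0:ℝ) 1, |deriv (ψ i) y| with hA
  set B := ⨆ y : Set.Icc (0:ℝ) 1, |ν i i - deriv (deriv (ψ i)) y| with hB
  have hbddA : BddAbove (Set.range fun y : Set.Icc (0:ℝ) 1 => |deriv (ψ i) y|) :=
    (isCompact_range ((hψ'_cont.comp continuous_subtype_val).abs)).bddAbove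
  have hbddB : BddAbove (Set.range fun y : Set.Icc (0:ℝ) 1 =>
      |ν i i - deriv (deriv (ψ i)) y|) :=
    (isCompact_range (((continuous_const.sub
      (hψ''_cont.comp continuous_subtype_val))).abs)).bddAbove
  have hAb : ∀ y ∈ Set.Icc (0:ℝ) 1, |deriv (ψ i) y| ≤ A := fun y hy =>
    le_ciSup hbddA (⟨y, hy⟩ : Set.Icc (0:ℝ) 1)
  have hBb : ∀ y ∈ Set.Icc (0:ℝ) 1, |ν i i - deriv (deriv (ψ i)) y| ≤ B := fun y hy =>
    le_ciSup hbddB (⟨y, hy⟩ : Set.Icc (0:ℝ) 1)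
  have hA0 : 0 ≤ A := le_trans (abs_nonneg _) (hAb 0 (by norm_num))
  have hB0 : 0 ≤ B := le_trans (abs_nonneg _) (hBb 0 (by norm_num))
  have hσB : 0 ≤ σ * B := mul_nonneg hσ.le hB0
  -- the function w = R'
  set w : ℝ → ℝ := fun y => -σ * (deriv (n i) y / n i y) with hw
  have hderivR : ∀ y ∈ Set.Icc (0:ℝ) 1,
      deriv (fun z => -σ * Real.log (n i z)) y = w y := by
    intro y hy
    have hny : n i y ≠ 0 := (hpos i y hy).ne'
    exact (((hn_diff y).hasDerivAt.log hny).const_mul (-σ)).deriv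
  have hwc : ContinuousOn w (Set.Icc (0:ℝ) 1) := by
    apply ContinuousOn.mul continuousOn_const
    exact (hn'_cont.continuousOn).div (hn_cont.continuousOn)
      (fun y hy => (hpos i y hy).ne')
  -- the point where |w| is maximal
  obtain ⟨x₀, hx₀, hmax⟩ := isCompact_Icc.exists_isMaxOn (Set.nonempty_Icc.2 zero_le_one)
    hwc.abs
  have hmax' : ∀ y ∈ Set.Icc (0:ℝ) 1, |w y| ≤ |w x₀| := fun y hy => hmax hy
  -- key bound at x₀
  have hkey : |w x₀| ≤ A + Real.sqrt (σ * B) := by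
    by_cases hint : x₀ ∈ Set.Ioo (0:ℝ) 1
    · -- interior maximum of |w|
      have hnx₀ : 0 < n i x₀ := hpos i x₀ hx₀
      set a := n i x₀ with ha
      set p := deriv (n i) x₀ with hp
      set q := deriv (deriv (n i)) x₀ with hq
      set P := deriv (ψ i) x₀ with hP
      set Q := deriv (deriv (ψ i)) x₀ with hQ
      -- w has a derivative at x₀
      have hder : HasDerivAt w (-σ * ((q * a - p * p) / a ^ 2)) x₀ := by
        exact (((hn'_diff x₀).hasDerivAt.div (hn_diff x₀).hasDerivAt hnx₀.ne')).const_mul (-σ)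
      -- the derivative vanishes at x₀
      have hIccnhds : Set.Icc (0:ℝ) 1 ∈ nhds x₀ := Icc_mem_nhds hint.1 hint.2
      have hzero : -σ * ((q * a - p * p) / a ^ 2) = 0 := by
        rcases le_or_gt 0 (w x₀) with hsign | hsign
        · have : IsLocalMax w x₀ := by
            filter_upwards [hIccnhds] with y hy
            exact le_trans (le_abs_self _) ((hmax' y hy).trans (by rw [abs_of_nonneg hsign]))
          exact this.hasDerivAt_eq_zero hder
        · have : IsLocalMin w x₀ := by
            filter_upwards [hIccnhds] with y hy
            have h1 : |w y| ≤ -(w x₀) := (hmax' y hy).trans (by rw [abs_of_neg hsign])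
            linarith [neg_abs_le (w y)]
          exact this.hasDerivAt_eq_zero hder
      have hqa : q * a = p * p := by
        have ha2 : (a:ℝ) ^ 2 ≠ 0 := pow_ne_zero _ hnx₀.ne'
        have := mul_eq_zero.mp hzero
        rcases this with h | h
        · exact absurd h (neg_ne_zero.mpr hσ.ne')
        · field_simp at h; linarith
      -- the PDE inequality at x₀
      have hprod : deriv (fun y => deriv (ψ i) y * n i y) x₀ = Q * a + P * p := by
        exact ((hψ'_diff x₀).hasDerivAt.mul (hn_diff x₀).hasDerivAt).deriv
      have hS : (0:ℝ) ≤ ∑ j ∈ Finset.univ.filter (· ≠ i), ν i j * n j x₀ := by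
        apply Finset.sum_nonneg
        intro j hj
        have hji : j ≠ i := (Finset.mem_filter.mp hj).2
        exact le_of_lt (mul_pos (hν i j (Ne.symm hji))
          (hpos j x₀ (Set.mem_Icc.mpr ⟨hint.1.le, hint.2.le⟩)))
      have hpde := hPDE i x₀ hint
      rw [hprod] at hpde
      have hineq : 0 ≤ -σ * q - (Q * a + P * p) + ν i i * a := by
        rw [hpde]; exact hS
      -- derive the quadratic inequality for w x₀
      have hw0a : w x₀ * a = -σ * p := by
        simp only [hw]
        field_simp
        exact congrArg Neg.neg (mul_div_cancel_right₀ _ hnx₀.ne')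
      have hquad : w x₀ ^ 2 ≤ P * w x₀ + σ * (ν i i - Q) := by
        have h3 : σ * q ≤ (ν i i - Q) * a - P * p := by nlinarith
        have h4 : σ ^ 2 * (p * p) ≤ σ * ((ν i i - Q) * a - P * p) * a := by
          have := mul_le_mul_of_nonneg_left h3 (mul_pos hσ hnx₀).le
          nlinarith [hqa]
        have h5 : (w x₀) ^ 2 * a ^ 2 = σ ^ 2 * (p * p) := by
          have h5' : (w x₀ * a) ^ 2 = (-σ * p) ^ 2 := by rw [hw0a]
          linear_combination h5'
        have h6 : P * w x₀ * a ^ 2 = -σ * P * p * a := by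
          linear_combination P * a * hw0a
        nlinarith [h4, h5, h6, mul_pos hnx₀ hnx₀]
      -- conclude
      have hQB : σ * (ν i i - Q) ≤ σ * B :=
        mul_le_mul_of_nonneg_left ((le_abs_self _).trans
          (hBb x₀ ⟨hint.1.le, hint.2.le⟩)) hσ.le
      have hPA : P * w x₀ ≤ A * |w x₀| := by
        calc P * w x₀ ≤ |P * w x₀| := le_abs_self _
          _ = |P| * |w x₀| := abs_mul _ _
          _ ≤ A * |w x₀| := mul_le_mul_of_nonneg_right
              (hAb x₀ ⟨hint.1.le, hint.2.le⟩) (abs_nonneg _)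
      have hM2 : |w x₀| ^ 2 ≤ A * |w x₀| + σ * B := by
        rw [sq_abs]; linarith
      nlinarith [Real.sq_sqrt hσB, Real.sqrt_nonneg (σ * B), abs_nonneg (w x₀)]
    · -- boundary point
      have hbd : x₀ ∈ ({0, 1} : Set ℝ) := by
        rcases hx₀.1.eq_or_lt.imp Eq.symm id with h | h
        · left; exact h
        · rcases hx₀.2.eq_or_lt with h' | h'
          · right; exact h'
          · exact absurd ⟨h, h'⟩ hint
      have hbc := hBC i x₀ hbd
      have hnx₀ : n i x₀ ≠ 0 := (hpos i x₀ hx₀).ne'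
      have hwψ : w x₀ = deriv (ψ i) x₀ := by
        simp only [hw]
        field_simp
        linarith
      rw [hwψ]
      exact le_trans (hAb x₀ hx₀) (le_add_of_nonneg_right (Real.sqrt_nonneg _))
  rw [hderivR x hx]
  exact le_trans (hmax' x hx) hkey
end

section
/- There exists a constant C > 0, depending only on I, the potentials ψ_1,…,ψ_I and the coefficients ν_ij (but not on σ), such that for every σ ∈ (0,1] and every solution (n_1,…,n_I) of (FP_σ), the phase functions R_i^σ := −σ ln n_i satisfy Σ_{i,j=1}^I ∫_0^1 (R_j^σ(x) − R_i^σ(x))² dx ≤ C σ. -/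
open Real Set MeasureTheory Filter

/-- Barrier lemma: if `w` has derivative `W` on `[0,1]`, `W < 0` wherever `β ≤ w`
in the interior, and `w < β` at both endpoints, then `w ≤ β` on `[0,1]`. -/
lemma riccati_barrier {w W : ℝ → ℝ} {β : ℝ}
    (hw : ∀ x ∈ Icc (0:ℝ) 1, HasDerivAt w (W x) x)
    (hW : ∀ x ∈ Ioo (0:ℝ) 1, β ≤ w x → W x < 0)
    (h0 : w 0 < β) (h1 : w 1 < β) :
    ∀ x ∈ Icc (0:ℝ) 1, w x ≤ β := by
  intro x₁ hx₁
  by_contra hcon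
  push_neg at hcon
  have hcont : ContinuousOn w (Icc (0:ℝ) 1) :=
    fun x hx => (hw x hx).continuousAt.continuousWithinAt
  have hsub : Icc (0:ℝ) x₁ ⊆ Icc (0:ℝ) 1 := Icc_subset_Icc le_rfl hx₁.2
  set S : Set ℝ := Icc (0:ℝ) x₁ ∩ w ⁻¹' (Iic β) with hSdef
  have hSclosed : IsClosed S :=
    (hcont.mono hsub).preimage_isClosed_of_isClosed isClosed_Icc isClosed_Iic
  have hS0 : (0:ℝ) ∈ S := ⟨⟨le_rfl, hx₁.1⟩, le_of_lt h0⟩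
  have hbdd : BddAbove S := ⟨x₁, fun y hy => hy.1.2⟩
  set x₀ := sSup S with hx₀def
  have hx₀S : x₀ ∈ S := hSclosed.csSup_mem ⟨0, hS0⟩ hbdd
  have hx₀0 : 0 ≤ x₀ := hx₀S.1.1
  have hwx₀ : w x₀ ≤ β := hx₀S.2
  have hx₀lt : x₀ < x₁ := by
    rcases lt_or_eq_of_le hx₀S.1.2 with h | h
    · exact h
    · rw [h] at hwx₀; linarith
  have hA : ∀ x ∈ Ioc x₀ x₁, β < w x := by
    intro x hx
    by_contra h
    push_neg at h
    have hxS : x ∈ S := ⟨⟨le_trans hx₀0 hx.1.le, hx.2⟩, h⟩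
    exact absurd (le_csSup hbdd hxS) (not_le.mpr hx.1)
  have hanti : StrictAntiOn w (Icc x₀ x₁) := by
    apply strictAntiOn_of_deriv_neg (convex_Icc _ _)
      (hcont.mono (Icc_subset_Icc hx₀0 hx₁.2))
    intro x hx
    rw [interior_Icc] at hx
    have hxI : x ∈ Icc (0:ℝ) 1 :=
      ⟨le_trans hx₀0 hx.1.le, le_trans hx.2.le hx₁.2⟩
    rw [(hw x hxI).deriv]
    exact hW x ⟨lt_of_le_of_lt hx₀0 hx.1, lt_of_lt_of_le hx.2 hx₁.2⟩
      (le_of_lt (hA x ⟨hx.1, hx.2.le⟩))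
  have := hanti (left_mem_Icc.mpr hx₀lt.le) (right_mem_Icc.mpr hx₀lt.le) hx₀lt
  linarith

set_option maxHeartbeats 1000000 in
/-- The phase functions are close to each other in `L²`, uniformly in `σ ∈ (0,1]`:
`∑_{i,j} ∫_0^1 (R_j^σ - R_i^σ)² ≤ C σ` with `C` independent of `σ`. -/
theorem fp_phase_L2_closeness {I : ℕ} [NeZero I]
    (ψ : Fin I → ℝ → ℝ) (ν : Fin I → Fin I → ℝ)
    (hψ : ∀ i, ContDiff ℝ 2 (ψ i))
    (hψL : ∀ i, ∃ L : NNReal, LipschitzOnWith L (deriv (deriv (ψ i))) (Set.Icc 0 1))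
    (hν : ∀ i j, i ≠ j → 0 < ν i j)
    (hνd : ∀ i, ν i i = ∑ j ∈ Finset.univ.filter (· ≠ i), ν j i) :
    ∃ C : ℝ, 0 < C ∧ ∀ σ ∈ Set.Ioc (0:ℝ) 1, ∀ n : Fin I → ℝ → ℝ,
      IsFPSolution ψ ν σ n →
        ∑ i : Fin I, ∑ j : Fin I,
          ∫ x in (0:ℝ)..1,
            ((-σ * Real.log (n j x)) - (-σ * Real.log (n i x))) ^ 2 ≤ C * σ := by
  classical
  -- regularity of the potentials
  have hψd : ∀ i, Differentiable ℝ (ψ i) := fun i => (hψ i).differentiable (by norm_num)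
  have hψd1 : ∀ i, Differentiable ℝ (deriv (ψ i)) := by
    intro i
    have h2 : ContDiff ℝ ((1:WithTop ℕ∞) + 1) (ψ i) := by norm_num [hψ i]
    exact (contDiff_succ_iff_deriv.mp h2).2.2.differentiable one_ne_zero
  have hψc2 : ∀ i, Continuous (deriv (deriv (ψ i))) := by
    intro i
    have h2 : ContDiff ℝ ((1:WithTop ℕ∞) + 1) (ψ i) := by norm_num [hψ i]
    exact (contDiff_succ_iff_deriv.mp h2).2.2.continuous_deriv le_rfl
  have hψc1 : ∀ i, Continuous (deriv (ψ i)) := fun i => (hψd1 i).continuous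
  -- a master constant K
  have hKex : ∀ i : Fin I, ∃ Ki : ℝ, ∀ x ∈ Icc (0:ℝ) 1,
      |deriv (ψ i) x| ≤ Ki ∧ |deriv (deriv (ψ i)) x| ≤ Ki := by
    intro i
    obtain ⟨C1, hC1⟩ := isCompact_Icc.exists_bound_of_continuousOn
      ((hψc1 i).continuousOn : ContinuousOn _ (Icc (0:ℝ) 1))
    obtain ⟨C2, hC2⟩ := isCompact_Icc.exists_bound_of_continuousOn
      ((hψc2 i).continuousOn : ContinuousOn _ (Icc (0:ℝ) 1))
    refine ⟨max C1 C2, fun x hx => ⟨?_, ?_⟩⟩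
    · simpa [Real.norm_eq_abs] using (hC1 x hx).trans (le_max_left _ _)
    · simpa [Real.norm_eq_abs] using (hC2 x hx).trans (le_max_right _ _)
  choose Kψ hKψ using hKex
  have hνii0 : ∀ i, 0 ≤ ν i i := by
    intro i
    rw [hνd i]
    exact Finset.sum_nonneg fun j hj => (hν j i (Finset.mem_filter.mp hj).2).le
  set T : Fin I → Fin I → ℝ := fun i j => ν i j + (if i = j then 0 else (ν i j)⁻¹) with hTdef
  have hT0 : ∀ i j, 0 ≤ T i j := by
    intro i j
    by_cases h : i = j
    · simp [hTdef, h, hνii0 j]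
    · have := hν i j h
      simp only [hTdef, if_neg h]
      positivity
  set K : ℝ := 1 + (∑ i, |Kψ i|) + ∑ i : Fin I, ∑ j : Fin I, T i j with hKdef
  have hsum1 : (0:ℝ) ≤ ∑ i, |Kψ i| := Finset.sum_nonneg fun i _ => abs_nonneg _
  have hsum2 : (0:ℝ) ≤ ∑ i : Fin I, ∑ j : Fin I, T i j :=
    Finset.sum_nonneg fun i _ => Finset.sum_nonneg fun j _ => hT0 i j
  have hK1 : 1 ≤ K := by simp only [hKdef]; linarith
  have hK0 : 0 < K := by linarith
  have hTK : ∀ i j, T i j ≤ K := by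
    intro i j
    have h1 : T i j ≤ ∑ j' : Fin I, T i j' :=
      Finset.single_le_sum (fun j' _ => hT0 i j') (Finset.mem_univ j)
    have h2 : (∑ j' : Fin I, T i j') ≤ ∑ i' : Fin I, ∑ j' : Fin I, T i' j' :=
      Finset.single_le_sum (fun i' _ => Finset.sum_nonneg fun j' _ => hT0 i' j')
        (Finset.mem_univ i)
    simp only [hKdef]; linarith
  have hKν : ∀ i j, ν i j ≤ K := by
    intro i j
    have := hTK i j
    by_cases h : i = j
    · subst h; simp [hTdef] at this; linarith
    · have hpos := hν i j h
      have : ν i j + (ν i j)⁻¹ ≤ K := by simpa [hTdef, if_neg h] using this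
      have hinv : 0 < (ν i j)⁻¹ := by positivity
      linarith
  have hKνinv : ∀ i j, i ≠ j → (ν i j)⁻¹ ≤ K := by
    intro i j h
    have := hTK i j
    have h2 : ν i j + (ν i j)⁻¹ ≤ K := by simpa [hTdef, if_neg h] using this
    linarith [(hν i j h)]
  have hKψ' : ∀ i, ∀ x ∈ Icc (0:ℝ) 1, |deriv (ψ i) x| ≤ K ∧ |deriv (deriv (ψ i)) x| ≤ K := by
    intro i x hx
    have h1 : |Kψ i| ≤ ∑ i', |Kψ i'| :=
      Finset.single_le_sum (f := fun i' => |Kψ i'|) (fun i' _ => abs_nonneg _) (Finset.mem_univ i)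
    have hle : Kψ i ≤ K := by
      simp only [hKdef]
      have := le_abs_self (Kψ i); linarith
    exact ⟨(hKψ i x hx).1.trans hle, (hKψ i x hx).2.trans hle⟩
  clear_value T K
  -- derived constants
  set N : ℝ := (I : ℝ) * K with hNdef
  have hνiiN : ∀ i, ν i i ≤ N := by
    intro i
    rw [hνd i]
    calc (∑ j ∈ Finset.univ.filter (· ≠ i), ν j i)
        ≤ ∑ j ∈ Finset.univ.filter (· ≠ i), K :=
          Finset.sum_le_sum fun j _ => hKν j i
      _ = (Finset.univ.filter (· ≠ i)).card * K := by rw [Finset.sum_const, nsmul_eq_mul]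
      _ ≤ (I : ℝ) * K := by
          apply mul_le_mul_of_nonneg_right _ hK0.le
          have : (Finset.univ.filter (· ≠ i)).card ≤ (Finset.univ : Finset (Fin I)).card :=
            Finset.card_filter_le _ _
          simp only [Finset.card_univ, Fintype.card_fin] at this
          exact_mod_cast le_trans this le_rfl
  have hN0 : 0 ≤ N := by
    have : (0:ℝ) ≤ (I:ℝ) := Nat.cast_nonneg I
    positivity
  set c : ℝ := N + K with hcdef
  have hc0 : 0 ≤ c := by linarith
  set B : ℝ := K + Real.sqrt c + 1 with hBdef
  have hsc : 0 ≤ Real.sqrt c := Real.sqrt_nonneg c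
  have hscsq : Real.sqrt c ^ 2 = c := Real.sq_sqrt hc0
  have hBK : K + 1 ≤ B := by simp only [hBdef]; linarith
  have hBsc : Real.sqrt c + 1 ≤ B := by simp only [hBdef]; linarith
  have hB1 : 1 ≤ B := by linarith
  have hB0 : 0 < B := by linarith
  clear_value N c B
  -- quadratic root estimate
  have hquad : ∀ σ : ℝ, 0 < σ → σ ≤ 1 → ∀ u : ℝ, B / σ ≤ |u| →
      σ * (-(σ * u ^ 2) + K * |u| + c) ≤ -1 := by
    intro σ hσ0 hσ1 u hu
    set t := |u| with htdef
    have ht0 : 0 ≤ t := abs_nonneg u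
    have husq : u ^ 2 = t ^ 2 := (sq_abs u).symm
    have h1 : B ≤ σ * t := by
      rw [div_le_iff₀ hσ0] at hu; linarith [hu]
    have h2 : K - σ * t ≤ -(Real.sqrt c + 1) := by linarith [hBK]
    have h3 : t * (K - σ * t) ≤ (B / σ) * (K - σ * t) := by
      apply mul_le_mul_of_nonpos_right _ (by linarith [hsc] : K - σ * t ≤ 0)
      rw [div_le_iff₀ hσ0] at hu; rw [div_le_iff₀ hσ0]; linarith
    have h4 : (B / σ) * (K - σ * t) ≤ (B / σ) * (-(Real.sqrt c + 1)) :=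
      mul_le_mul_of_nonneg_left h2 (by positivity)
    have h5 : σ * ((B / σ) * (-(Real.sqrt c + 1))) = B * (-(Real.sqrt c + 1)) := by
      field_simp
    have h6 : B * (-(Real.sqrt c + 1)) ≤ -(c + 1) := by
      have : (Real.sqrt c + 1) * (Real.sqrt c + 1) ≤ B * (Real.sqrt c + 1) := by
        apply mul_le_mul_of_nonneg_right _ (by linarith)
        linarith
      nlinarith [hscsq, hsc]
    have h7 : σ * (t * (K - σ * t)) ≤ -(c + 1) := by
      calc σ * (t * (K - σ * t)) ≤ σ * ((B / σ) * (K - σ * t)) :=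
            mul_le_mul_of_nonneg_left h3 hσ0.le
        _ ≤ σ * ((B / σ) * (-(Real.sqrt c + 1))) := mul_le_mul_of_nonneg_left h4 hσ0.le
        _ = B * (-(Real.sqrt c + 1)) := h5
        _ ≤ -(c + 1) := h6
    have hexp : -(σ * u ^ 2) + K * t + c = t * (K - σ * t) + c := by
      rw [husq]; ring
    nlinarith [h7, hσ1, hc0]
  set C7 : ℝ := N + K + K * B + 2 * B with hC7def
  have hC71 : 1 ≤ C7 := by
    have hKB : 0 ≤ K * B := by positivity
    simp only [hC7def]; linarith
  set C8 : ℝ := K * C7 with hC8def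
  have hC81 : 1 ≤ C8 := by
    simp only [hC8def]; nlinarith [hK1, hC71]
  clear_value C7 C8
  set C9 : ℝ := 1 + Real.log (2 * B * C8) with hC9def
  have hC91 : 1 ≤ C9 := by
    have : (0:ℝ) ≤ Real.log (2 * B * C8) := Real.log_nonneg (by nlinarith [hB1, hC81])
    simp only [hC9def]; linarith
  clear_value C9
  refine ⟨(I : ℝ) ^ 2 * (2 * C9 ^ 2 + 32) + 1, by positivity, ?_⟩
  rintro σ ⟨hσ0, hσ1⟩ n ⟨hreg, hpos, heq, hbc⟩
  -- regularity of the solution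
  have hnd : ∀ i, Differentiable ℝ (n i) := fun i => (hreg i).differentiable (by norm_num)
  have hnd1 : ∀ i, Differentiable ℝ (deriv (n i)) := by
    intro i
    have h2 : ContDiff ℝ ((1:WithTop ℕ∞) + 1) (n i) := by norm_num [hreg i]
    exact (contDiff_succ_iff_deriv.mp h2).2.2.differentiable one_ne_zero
  have hnc2 : ∀ i, Continuous (deriv (deriv (n i))) := by
    intro i
    have h2 : ContDiff ℝ ((1:WithTop ℕ∞) + 1) (n i) := by norm_num [hreg i]
    exact (contDiff_succ_iff_deriv.mp h2).2.2.continuous_deriv le_rfl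
  have hnc1 : ∀ i, Continuous (deriv (n i)) := fun i => (hnd1 i).continuous
  have hnc : ∀ i, Continuous (n i) := fun i => (hnd i).continuous
  set w : Fin I → ℝ → ℝ := fun i x => deriv (n i) x / n i x with hwdef
  set W : Fin I → ℝ → ℝ := fun i x =>
    (deriv (deriv (n i)) x * n i x - deriv (n i) x * deriv (n i) x) / (n i x) ^ 2 with hWdef
  clear_value w W
  have hder : ∀ i, ∀ x : ℝ, n i x ≠ 0 → HasDerivAt (w i) (W i x) x := by
    intro i x hx
    have h1 : HasDerivAt (deriv (n i)) (deriv (deriv (n i)) x) x := (hnd1 i x).hasDerivAt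
    have h2 : HasDerivAt (n i) (deriv (n i) x) x := (hnd i x).hasDerivAt
    simp only [hwdef, hWdef]
    exact h1.div h2 hx
  have hwcont : ∀ i, ContinuousOn (w i) (Icc (0:ℝ) 1) := by
    intro i
    rw [hwdef]
    exact ((hnc1 i).continuousOn).div ((hnc i).continuousOn)
      (fun x hx => (hpos i x hx).ne')
  have hWcont : ∀ i, ContinuousOn (W i) (Icc (0:ℝ) 1) := by
    intro i
    rw [hWdef]
    apply ContinuousOn.div
    · exact (((hnc2 i).mul (hnc i)).sub ((hnc1 i).mul (hnc1 i))).continuousOn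
    · exact ((hnc i).pow 2).continuousOn
    · intro x hx; exact pow_ne_zero 2 (hpos i x hx).ne'
  -- boundary values of w
  have hwbd : ∀ i, ∀ x ∈ ({0,1} : Set ℝ), x ∈ Icc (0:ℝ) 1 → |w i x| < B / σ := by
    intro i x hx hxI
    have hP : (0:ℝ) < n i x := hpos i x hxI
    have hP' : n i x ≠ 0 := hP.ne'
    have hflux := hbc i x hx
    have hwx : σ * w i x = -(deriv (ψ i) x) := by
      simp only [hwdef]
      field_simp
      linarith [hflux]
    have h1 : |σ * w i x| ≤ K := by rw [hwx, abs_neg]; exact (hKψ' i x hxI).1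
    have h2 : σ * |w i x| ≤ K := by rwa [abs_mul, abs_of_pos hσ0] at h1
    rw [lt_div_iff₀ hσ0, mul_comm]
    linarith
  -- the exchange term
  set S : Fin I → ℝ → ℝ :=
    fun i x => ∑ j ∈ Finset.univ.filter (· ≠ i), ν i j * (n j x / n i x) with hSdef
  clear_value S
  have hS0 : ∀ i, ∀ x ∈ Icc (0:ℝ) 1, 0 ≤ S i x := by
    intro i x hx
    simp only [hSdef]
    apply Finset.sum_nonneg
    intro j hj
    have hj' : j ≠ i := (Finset.mem_filter.mp hj).2
    have := hν i j (Ne.symm hj')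
    have := hpos j x hx
    have := hpos i x hx
    positivity
  -- the interior identity for w
  have hid : ∀ i, ∀ x ∈ Ioo (0:ℝ) 1,
      σ * W i x = -(σ * (w i x)^2) - deriv (deriv (ψ i)) x - deriv (ψ i) x * w i x
        + ν i i - S i x := by
    intro i x hx
    have hxI : x ∈ Icc (0:ℝ) 1 := Ioo_subset_Icc_self hx
    have hP : (0:ℝ) < n i x := hpos i x hxI
    have hP' : n i x ≠ 0 := hP.ne'
    have hprod : deriv (fun y => deriv (ψ i) y * n i y) x
        = deriv (deriv (ψ i)) x * n i x + deriv (ψ i) x * deriv (n i) x :=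
      (((hψd1 i) x).hasDerivAt.mul ((hnd i) x).hasDerivAt).deriv
    have heqx := heq i x hx
    rw [hprod] at heqx
    have hsum : S i x * n i x = ∑ j ∈ Finset.univ.filter (· ≠ i), ν i j * n j x := by
      simp only [hSdef, Finset.sum_mul]
      apply Finset.sum_congr rfl
      intro j _
      field_simp
    have heqx2 : -σ * deriv (deriv (n i)) x
        - (deriv (deriv (ψ i)) x * n i x + deriv (ψ i) x * deriv (n i) x)
        + ν i i * n i x = S i x * n i x := by rw [hsum]; exact heqx
    simp only [hwdef, hWdef]
    field_simp
    linear_combination (-((n i x))) * heqx2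
  -- negativity of W when |w| is large
  have hWneg : ∀ i, ∀ x ∈ Ioo (0:ℝ) 1, B / σ ≤ |w i x| → W i x < 0 := by
    intro i x hx habs
    have hxI : x ∈ Icc (0:ℝ) 1 := Ioo_subset_Icc_self hx
    have hq := hquad σ hσ0 hσ1 (w i x) habs
    have hineq : σ * W i x ≤ -(σ * (w i x)^2) + K * |w i x| + c := by
      have hid' := hid i x hx
      have hdd := abs_le.mp (hKψ' i x hxI).2
      have h2 : -(deriv (ψ i) x * w i x) ≤ K * |w i x| := by
        calc -(deriv (ψ i) x * w i x) ≤ |deriv (ψ i) x * w i x| := neg_le_abs _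
          _ = |deriv (ψ i) x| * |w i x| := abs_mul _ _
          _ ≤ K * |w i x| := mul_le_mul_of_nonneg_right (hKψ' i x hxI).1 (abs_nonneg _)
      have h3 : ν i i ≤ N := hνiiN i
      have h4 : 0 ≤ S i x := hS0 i x hxI
      rw [hid', hcdef]
      linarith
    have h5 : σ * (σ * W i x) ≤ -1 :=
      le_trans (mul_le_mul_of_nonneg_left hineq hσ0.le) hq
    by_contra hcon
    push_neg at hcon
    have : 0 ≤ σ * (σ * W i x) := mul_nonneg hσ0.le (mul_nonneg hσ0.le hcon)
    linarith
  -- the uniform gradient bound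
  have hwB : ∀ i, ∀ x ∈ Icc (0:ℝ) 1, |w i x| ≤ B / σ := by
    intro i x hx
    have hub : ∀ y ∈ Icc (0:ℝ) 1, w i y ≤ B / σ := by
      apply riccati_barrier (W := W i)
      · intro y hy; exact hder i y (hpos i y hy).ne'
      · intro y hy hge
        exact hWneg i y hy (le_trans hge (le_abs_self _))
      · exact lt_of_abs_lt (hwbd i 0 (by simp) (by norm_num))
      · exact lt_of_abs_lt (hwbd i 1 (by simp) (by norm_num))
    have hlb : ∀ y ∈ Icc (0:ℝ) 1, -(B/σ) ≤ w i y := by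
      have h2 : ∀ y ∈ Icc (0:ℝ) 1, -(w i (1 - y)) ≤ B / σ := by
        apply riccati_barrier (W := fun y => W i (1 - y))
        · intro y hy
          have hy' : (1:ℝ) - y ∈ Icc (0:ℝ) 1 := ⟨by linarith [hy.2], by linarith [hy.1]⟩
          have hd := hder i (1 - y) (hpos i _ hy').ne'
          have hinner : HasDerivAt (fun z : ℝ => 1 - z) (-1) y := by
            simpa using (hasDerivAt_id y).const_sub 1
          have hcomp := (hd.comp y hinner).neg
          refine hcomp.congr_deriv ?_
          ring
        · intro y hy hge
          have hy' : (1:ℝ) - y ∈ Ioo (0:ℝ) 1 := ⟨by linarith [hy.2], by linarith [hy.1]⟩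
          apply hWneg i _ hy'
          calc B / σ ≤ -(w i (1 - y)) := hge
            _ ≤ |w i (1 - y)| := neg_le_abs _
        · show -(w i (1 - 0)) < B / σ
          rw [show (1:ℝ) - 0 = 1 by norm_num]
          exact lt_of_le_of_lt (neg_le_abs _) (hwbd i 1 (by simp) (by norm_num))
        · show -(w i (1 - 1)) < B / σ
          rw [show (1:ℝ) - 1 = 0 by norm_num]
          exact lt_of_le_of_lt (neg_le_abs _) (hwbd i 0 (by simp) (by norm_num))
      intro y hy
      have := h2 (1 - y) ⟨by linarith [hy.2], by linarith [hy.1]⟩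
      rw [show (1:ℝ) - (1 - y) = y by ring] at this
      linarith
    exact abs_le.mpr ⟨hlb x hx, hub x hx⟩
  -- integral machinery
  have hIcc : uIcc (0:ℝ) 1 = Icc 0 1 := uIcc_of_le zero_le_one
  have hIoc : uIoc (0:ℝ) 1 = Ioc 0 1 := uIoc_of_le zero_le_one
  have hae_ne1 : ∀ᵐ x : ℝ, x ≠ (1:ℝ) := by
    rw [ae_iff]
    convert volume_singleton (a := (1:ℝ)) using 2
    ext x; simp
  have hintW : ∀ i, IntervalIntegrable (W i) volume 0 1 := by
    intro i; apply ContinuousOn.intervalIntegrable; rw [hIcc]; exact hWcont i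
  have hftc : ∀ i, ∫ x in (0:ℝ)..1, W i x = w i 1 - w i 0 := by
    intro i
    apply intervalIntegral.integral_eq_sub_of_hasDerivAt
    · intro x hx; rw [hIcc] at hx; exact hder i x (hpos i x hx).ne'
    · exact hintW i
  have hcontdiv : ∀ (j i : Fin I), ContinuousOn (fun x => n j x / n i x) (Icc (0:ℝ) 1) :=
    fun j i => ((hnc j).continuousOn).div ((hnc i).continuousOn)
      (fun x hx => (hpos i x hx).ne')
  have hintdiv : ∀ (j i : Fin I), IntervalIntegrable (fun x => n j x / n i x) volume 0 1 := by
    intro j i; apply ContinuousOn.intervalIntegrable; rw [hIcc]; exact hcontdiv j i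
  have hdivnonneg : ∀ (j i : Fin I), ∀ x ∈ Icc (0:ℝ) 1, 0 ≤ n j x / n i x :=
    fun j i x hx => le_of_lt (div_pos (hpos j x hx) (hpos i x hx))
  have hintS : ∀ i, IntervalIntegrable (S i) volume 0 1 := by
    intro i; apply ContinuousOn.intervalIntegrable; rw [hIcc, hSdef]
    apply continuousOn_finset_sum
    intro j hj
    exact continuousOn_const.mul (hcontdiv j i)
  -- bound on the exchange integral
  have hSbound : ∀ i, ∫ x in (0:ℝ)..1, S i x ≤ C7 / σ := by
    intro i
    set A : ℝ → ℝ := fun x => -(σ * (w i x)^2) - deriv (deriv (ψ i)) x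
        - deriv (ψ i) x * w i x + ν i i with hAdef
    have hAcont : ContinuousOn A (Icc (0:ℝ) 1) := by
      rw [hAdef]
      exact ((((continuousOn_const.mul ((hwcont i).pow 2)).neg.sub
        ((hψc2 i).continuousOn)).sub
        (((hψc1 i).continuousOn).mul (hwcont i))).add continuousOn_const)
    have hintA : IntervalIntegrable A volume 0 1 := by
      apply ContinuousOn.intervalIntegrable; rw [hIcc]; exact hAcont
    have hSid : ∫ x in (0:ℝ)..1, S i x
        = (∫ x in (0:ℝ)..1, (A x - σ * W i x)) := by
      apply intervalIntegral.integral_congr_ae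
      filter_upwards [hae_ne1] with x hx1 hxu
      rw [hIoc] at hxu
      have hxo : x ∈ Ioo (0:ℝ) 1 := ⟨hxu.1, lt_of_le_of_ne hxu.2 hx1⟩
      have := hid i x hxo
      simp only [hAdef]
      linarith
    have hsplit : ∫ x in (0:ℝ)..1, (A x - σ * W i x)
        = (∫ x in (0:ℝ)..1, A x) - σ * (w i 1 - w i 0) := by
      rw [intervalIntegral.integral_sub hintA ((hintW i).const_mul σ),
        intervalIntegral.integral_const_mul, hftc i]
    have hAptwise : ∀ x ∈ Icc (0:ℝ) 1, A x ≤ K + K * (B / σ) + N := by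
      intro x hx
      have h1 : -(σ * (w i x)^2) ≤ 0 := by nlinarith [sq_nonneg (w i x), hσ0]
      have h2 := abs_le.mp (hKψ' i x hx).2
      have h3 : -(deriv (ψ i) x * w i x) ≤ K * (B / σ) := by
        calc -(deriv (ψ i) x * w i x) ≤ |deriv (ψ i) x * w i x| := neg_le_abs _
          _ = |deriv (ψ i) x| * |w i x| := abs_mul _ _
          _ ≤ K * (B / σ) :=
            mul_le_mul (hKψ' i x hx).1 (hwB i x hx) (abs_nonneg _) hK0.le
      have h4 := hνiiN i
      simp only [hAdef]
      linarith
    have hAint : ∫ x in (0:ℝ)..1, A x ≤ K + K * (B / σ) + N := by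
      have := intervalIntegral.integral_mono_on zero_le_one hintA
        intervalIntegrable_const hAptwise
      simpa using this
    have hbdry : -(σ * (w i 1 - w i 0)) ≤ 2 * B := by
      have h10 : |w i 1| ≤ B / σ := hwB i 1 (by norm_num)
      have h00 : |w i 0| ≤ B / σ := hwB i 0 (by norm_num)
      have e1 : σ * (B / σ) = B := by field_simp
      have := abs_le.mp h10
      have := abs_le.mp h00
      nlinarith [mul_le_mul_of_nonneg_left (abs_le.mp h10).2 hσ0.le,
        mul_le_mul_of_nonneg_left (abs_le.mp h00).2 hσ0.le,
        mul_le_mul_of_nonneg_left (abs_le.mp h10).1 hσ0.le,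
        mul_le_mul_of_nonneg_left (abs_le.mp h00).1 hσ0.le]
    have htot : ∫ x in (0:ℝ)..1, S i x ≤ K + K * (B / σ) + N + 2 * B := by
      rw [hSid, hsplit]; linarith
    rw [le_div_iff₀ hσ0]
    have e2 : (K + K * (B / σ) + N + 2 * B) * σ = K * σ + K * B + N * σ + 2 * B * σ := by
      field_simp
    calc (∫ x in (0:ℝ)..1, S i x) * σ
        ≤ (K + K * (B / σ) + N + 2 * B) * σ := mul_le_mul_of_nonneg_right htot hσ0.le
      _ = K * σ + K * B + N * σ + 2 * B * σ := e2
      _ ≤ C7 := by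
          rw [hC7def]
          nlinarith [mul_le_mul_of_nonneg_left hσ1 hK0.le,
            mul_le_mul_of_nonneg_left hσ1 hN0,
            mul_le_mul_of_nonneg_left hσ1 hB0.le]
  -- bound on each pairwise integral
  have hpair : ∀ i j : Fin I, j ≠ i →
      ∫ x in (0:ℝ)..1, n j x / n i x ≤ C8 / σ := by
    intro i j hji
    have hsplit : ∫ x in (0:ℝ)..1, S i x
        = ∑ j' ∈ Finset.univ.filter (· ≠ i), ν i j' * ∫ x in (0:ℝ)..1, n j' x / n i x := by
      simp only [hSdef]
      rw [intervalIntegral.integral_finset_sum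
        (fun j' _ => (hintdiv j' i).const_mul (ν i j'))]
      exact Finset.sum_congr rfl fun j' _ => intervalIntegral.integral_const_mul _ _
    have hterm_nonneg : ∀ j' ∈ Finset.univ.filter (· ≠ i),
        0 ≤ ν i j' * ∫ x in (0:ℝ)..1, n j' x / n i x := by
      intro j' hj'
      have hj'i : j' ≠ i := (Finset.mem_filter.mp hj').2
      exact mul_nonneg (hν i j' (Ne.symm hj'i)).le
        (intervalIntegral.integral_nonneg zero_le_one (hdivnonneg j' i))
    have hsingle : ν i j * ∫ x in (0:ℝ)..1, n j x / n i x ≤ C7 / σ := by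
      calc ν i j * ∫ x in (0:ℝ)..1, n j x / n i x
          ≤ ∑ j' ∈ Finset.univ.filter (· ≠ i), ν i j' * ∫ x in (0:ℝ)..1, n j' x / n i x :=
            Finset.single_le_sum hterm_nonneg (by simp [hji])
        _ = ∫ x in (0:ℝ)..1, S i x := hsplit.symm
        _ ≤ C7 / σ := hSbound i
    have hν0 : 0 < ν i j := hν i j (Ne.symm hji)
    have hKν1 : 1 ≤ K * ν i j := by
      calc (1:ℝ) = ν i j * (ν i j)⁻¹ := (mul_inv_cancel₀ hν0.ne').symm
        _ ≤ ν i j * K := mul_le_mul_of_nonneg_left (hKνinv i j (Ne.symm hji)) hν0.le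
        _ = K * ν i j := mul_comm _ _
    have hint0 : 0 ≤ ∫ x in (0:ℝ)..1, n j x / n i x :=
      intervalIntegral.integral_nonneg zero_le_one (hdivnonneg j i)
    calc ∫ x in (0:ℝ)..1, n j x / n i x
        = 1 * ∫ x in (0:ℝ)..1, n j x / n i x := (one_mul _).symm
      _ ≤ (K * ν i j) * ∫ x in (0:ℝ)..1, n j x / n i x :=
          mul_le_mul_of_nonneg_right hKν1 hint0
      _ = K * (ν i j * ∫ x in (0:ℝ)..1, n j x / n i x) := by ring
      _ ≤ K * (C7 / σ) := mul_le_mul_of_nonneg_left hsingle hK0.le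
      _ = C8 / σ := by rw [hC8def]; ring
  -- pointwise bound on differences of logs (Laplace principle)
  have hlogσ : Real.log σ ≤ 0 := Real.log_nonpos hσ0.le hσ1
  have hE0 : (0:ℝ) ≤ C9 - 2 * Real.log σ := by linarith
  have hlog : ∀ i j : Fin I, j ≠ i → ∀ x ∈ Icc (0:ℝ) 1,
      Real.log (n j x) - Real.log (n i x) ≤ C9 - 2 * Real.log σ := by
    intro i j hji
    set G : ℝ → ℝ := fun x => Real.log (n j x) - Real.log (n i x) with hGdef
    have hGder : ∀ x ∈ Icc (0:ℝ) 1, HasDerivAt G (w j x - w i x) x := by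
      intro x hx
      have h1 : HasDerivAt (fun y => Real.log (n j y)) (w j x) x := by
        have := ((hnd j x).hasDerivAt).log (hpos j x hx).ne'
        simpa [hwdef] using this
      have h2 : HasDerivAt (fun y => Real.log (n i y)) (w i x) x := by
        have := ((hnd i x).hasDerivAt).log (hpos i x hx).ne'
        simpa [hwdef] using this
      exact h1.sub h2
    have hGcont : ContinuousOn G (Icc (0:ℝ) 1) :=
      fun x hx => (hGder x hx).continuousAt.continuousWithinAt
    have hGlip : LipschitzOnWith (Real.toNNReal (2 * B / σ)) G (Icc (0:ℝ) 1) := by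
      apply (convex_Icc (0:ℝ) 1).lipschitzOnWith_of_nnnorm_hasDerivWithin_le
        (f' := fun x => w j x - w i x)
        (fun x hx => (hGder x hx).hasDerivWithinAt)
      intro x hx
      rw [← NNReal.coe_le_coe, coe_nnnorm, Real.coe_toNNReal _ (by positivity),
        Real.norm_eq_abs]
      calc |w j x - w i x| = |w j x + -(w i x)| := by rw [sub_eq_add_neg]
        _ ≤ |w j x| + |-(w i x)| := abs_add_le _ _
        _ = |w j x| + |w i x| := by rw [abs_neg]
        _ ≤ B / σ + B / σ := add_le_add (hwB j x hx) (hwB i x hx)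
        _ = 2 * B / σ := by ring
    obtain ⟨x₀, hx₀, hmax⟩ :=
      isCompact_Icc.exists_isMaxOn (nonempty_Icc.mpr zero_le_one) hGcont
    set M := G x₀ with hMdef
    set δ := σ / (2 * B) with hδdef
    have hδ0 : 0 < δ := by positivity
    have hδhalf : δ ≤ 1 / 2 := by
      rw [hδdef, div_le_div_iff₀ (by positivity) (by norm_num)]
      nlinarith
    obtain ⟨u, v, hu0, huv, hv1, hx₀u, hx₀v⟩ :
        ∃ u v : ℝ, 0 ≤ u ∧ v - u = δ ∧ v ≤ 1 ∧ u ≤ x₀ ∧ x₀ ≤ v := by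
      rcases le_or_gt x₀ (1/2) with h | h
      · exact ⟨x₀, x₀ + δ, hx₀.1, by ring, by linarith, le_rfl, by linarith⟩
      · exact ⟨x₀ - δ, x₀, by linarith [hx₀.2], by ring, hx₀.2, by linarith, le_rfl⟩
    have huv' : u ≤ v := by linarith
    have hsubJ : Icc u v ⊆ Icc (0:ℝ) 1 := Icc_subset_Icc hu0 hv1
    have hlow : ∀ x ∈ Icc u v, Real.exp (M - 1) ≤ Real.exp (G x) := by
      intro x hxJ
      apply Real.exp_le_exp.mpr
      have hxI := hsubJ hxJ
      have hd := hGlip.dist_le_mul x hxI x₀ hx₀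
      rw [Real.dist_eq, Real.dist_eq, Real.coe_toNNReal _ (by positivity)] at hd
      have hxx : |x - x₀| ≤ δ := by
        rw [abs_le]
        exact ⟨by linarith [hxJ.1, hxJ.2], by linarith [hxJ.1, hxJ.2]⟩
      have h1 : |G x - G x₀| ≤ 2 * B / σ * δ :=
        le_trans hd (mul_le_mul_of_nonneg_left hxx (by positivity))
      have h2 : 2 * B / σ * δ = 1 := by rw [hδdef]; field_simp
      have h3 := (abs_le.mp (h1.trans_eq h2)).1
      simp only [hMdef]; linarith
    have hexpcont : ContinuousOn (fun x => Real.exp (G x)) (Icc (0:ℝ) 1) :=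
      Real.continuous_exp.comp_continuousOn hGcont
    have hintexp : IntervalIntegrable (fun x => Real.exp (G x)) volume 0 1 := by
      apply ContinuousOn.intervalIntegrable; rw [hIcc]; exact hexpcont
    have hint0u : IntervalIntegrable (fun x => Real.exp (G x)) volume 0 u :=
      hintexp.mono_set (by rw [hIcc, uIcc_of_le hu0]; exact Icc_subset_Icc le_rfl (by linarith))
    have hintuv : IntervalIntegrable (fun x => Real.exp (G x)) volume u v :=
      hintexp.mono_set (by rw [hIcc, uIcc_of_le huv']; exact hsubJ)
    have hintv1 : IntervalIntegrable (fun x => Real.exp (G x)) volume v 1 :=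
      hintexp.mono_set (by rw [hIcc, uIcc_of_le hv1]; exact Icc_subset_Icc (by linarith) le_rfl)
    have hJ : δ * Real.exp (M - 1) ≤ ∫ x in u..v, Real.exp (G x) := by
      have h := intervalIntegral.integral_mono_on huv' intervalIntegrable_const hintuv hlow
      rw [intervalIntegral.integral_const, smul_eq_mul, huv] at h
      exact h
    have hmono : ∫ x in u..v, Real.exp (G x) ≤ ∫ x in (0:ℝ)..1, Real.exp (G x) := by
      have e1 : (∫ x in (0:ℝ)..u, Real.exp (G x)) + (∫ x in u..v, Real.exp (G x))
          = ∫ x in (0:ℝ)..v, Real.exp (G x) :=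
        intervalIntegral.integral_add_adjacent_intervals hint0u hintuv
      have e2 : (∫ x in (0:ℝ)..v, Real.exp (G x)) + (∫ x in v..(1:ℝ), Real.exp (G x))
          = ∫ x in (0:ℝ)..1, Real.exp (G x) :=
        intervalIntegral.integral_add_adjacent_intervals
          (hintexp.mono_set (by rw [hIcc, uIcc_of_le (le_trans hu0 huv')]; exact Icc_subset_Icc le_rfl hv1)) hintv1
      have p1 : 0 ≤ ∫ x in (0:ℝ)..u, Real.exp (G x) :=
        intervalIntegral.integral_nonneg hu0 (fun x _ => (Real.exp_pos _).le)
      have p2 : 0 ≤ ∫ x in v..(1:ℝ), Real.exp (G x) :=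
        intervalIntegral.integral_nonneg hv1 (fun x _ => (Real.exp_pos _).le)
      linarith
    have hexpeq : ∫ x in (0:ℝ)..1, Real.exp (G x) = ∫ x in (0:ℝ)..1, n j x / n i x := by
      apply intervalIntegral.integral_congr
      rw [hIcc]
      intro x hx
      simp only [hGdef]
      rw [Real.exp_sub, Real.exp_log (hpos j x hx), Real.exp_log (hpos i x hx)]
    have hchain : δ * Real.exp (M - 1) ≤ C8 / σ := by
      calc δ * Real.exp (M - 1) ≤ ∫ x in u..v, Real.exp (G x) := hJ
        _ ≤ ∫ x in (0:ℝ)..1, Real.exp (G x) := hmono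
        _ = ∫ x in (0:ℝ)..1, n j x / n i x := hexpeq
        _ ≤ C8 / σ := hpair i j hji
    have hexpM : Real.exp (M - 1) ≤ 2 * B * C8 / σ ^ 2 := by
      have h1 : Real.exp (M - 1) ≤ (C8 / σ) / δ := by
        rw [le_div_iff₀ hδ0]
        linarith [hchain, mul_comm δ (Real.exp (M - 1))]
      have h2 : (C8 / σ) / δ = 2 * B * C8 / σ ^ 2 := by
        rw [hδdef]; field_simp
      linarith [h1, h2.symm.le, h2.le]
    have hMbound : M ≤ C9 - 2 * Real.log σ := by
      have h4 : M - 1 ≤ Real.log (2 * B * C8 / σ ^ 2) :=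
        (Real.le_log_iff_exp_le (by positivity)).mpr hexpM
      have h5 : Real.log (2 * B * C8 / σ ^ 2)
          = Real.log (2 * B * C8) - 2 * Real.log σ := by
        rw [Real.log_div (by positivity) (by positivity), Real.log_pow]
        push_cast; ring
      rw [h5] at h4
      rw [hC9def]; linarith
    intro x hx
    exact le_trans (hmax hx) hMbound
  have hlog2 : ∀ i j : Fin I, ∀ x ∈ Icc (0:ℝ) 1,
      |Real.log (n j x) - Real.log (n i x)| ≤ C9 - 2 * Real.log σ := by
    intro i j x hx
    by_cases h : j = i
    · subst h; simpa using hE0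
    · exact abs_le.mpr ⟨by linarith [hlog j i (fun hh => h hh.symm) x hx],
        hlog i j h x hx⟩
  -- final estimate for each pair
  have hfinalpair : ∀ i j : Fin I,
      (∫ x in (0:ℝ)..1, ((-σ * Real.log (n j x)) - (-σ * Real.log (n i x))) ^ 2)
        ≤ (2 * C9 ^ 2 + 32) * σ := by
    intro i j
    set E := C9 - 2 * Real.log σ with hEdef2
    have hptw : ∀ x ∈ Icc (0:ℝ) 1,
        ((-σ * Real.log (n j x)) - (-σ * Real.log (n i x))) ^ 2 ≤ σ ^ 2 * E ^ 2 := by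
      intro x hx
      have h1 := abs_le.mp (hlog2 i j x hx)
      have h2 : ((-σ * Real.log (n j x)) - (-σ * Real.log (n i x))) ^ 2
          = σ ^ 2 * (Real.log (n j x) - Real.log (n i x)) ^ 2 := by ring
      rw [h2]
      apply mul_le_mul_of_nonneg_left _ (sq_nonneg σ)
      nlinarith [h1.1, h1.2]
    have hintf : IntervalIntegrable
        (fun x => ((-σ * Real.log (n j x)) - (-σ * Real.log (n i x))) ^ 2) volume 0 1 := by
      apply ContinuousOn.intervalIntegrable; rw [hIcc]
      apply ContinuousOn.pow
      apply ContinuousOn.sub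
      · exact continuousOn_const.mul
          (((hnc j).continuousOn).log (fun x hx => (hpos j x hx).ne'))
      · exact continuousOn_const.mul
          (((hnc i).continuousOn).log (fun x hx => (hpos i x hx).ne'))
    have hle1 : (∫ x in (0:ℝ)..1, ((-σ * Real.log (n j x)) - (-σ * Real.log (n i x))) ^ 2)
        ≤ σ ^ 2 * E ^ 2 := by
      have h := intervalIntegral.integral_mono_on zero_le_one hintf
        intervalIntegrable_const hptw
      simpa using h
    have ht : σ * E ^ 2 ≤ 2 * C9 ^ 2 + 32 := by
      set t := -Real.log σ with htdef
      have ht0 : 0 ≤ t := by simp only [htdef]; linarith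
      have hσe : σ = Real.exp (-t) := by
        simp only [htdef, neg_neg]; rw [Real.exp_log hσ0]
      have hq1 : E ^ 2 ≤ 2 * C9 ^ 2 + 8 * t ^ 2 := by
        have hEt : E = C9 + 2 * t := by simp only [hEdef2, htdef]; ring
        rw [hEt]
        nlinarith [sq_nonneg (C9 - 2 * t)]
      have ht4 : σ * t ^ 2 ≤ 4 := by
        have h1 : t / 2 ≤ Real.exp (t / 2) := by linarith [Real.add_one_le_exp (t / 2)]
        have h2 : (t / 2) ^ 2 ≤ (Real.exp (t / 2)) ^ 2 :=
          pow_le_pow_left₀ (by positivity) h1 2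
        have h3 : (Real.exp (t / 2)) ^ 2 = Real.exp t := by
          rw [sq, ← Real.exp_add]; norm_num
        have h4 : t ^ 2 ≤ 4 * Real.exp t := by nlinarith [h2, h3]
        calc σ * t ^ 2 ≤ σ * (4 * Real.exp t) := mul_le_mul_of_nonneg_left h4 hσ0.le
          _ = 4 * (Real.exp (-t) * Real.exp t) := by rw [hσe]; ring
          _ = 4 := by rw [← Real.exp_add]; simp
      have hm := mul_le_mul_of_nonneg_left hq1 hσ0.le
      have hexpand : σ * (2 * C9 ^ 2 + 8 * t ^ 2) = σ * (2 * C9 ^ 2) + 8 * (σ * t ^ 2) := by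
        ring
      have h2C : σ * (2 * C9 ^ 2) ≤ 2 * C9 ^ 2 := by nlinarith [sq_nonneg C9]
      linarith [hm, hexpand.le, hexpand.symm.le, h2C, ht4]
    calc (∫ x in (0:ℝ)..1, ((-σ * Real.log (n j x)) - (-σ * Real.log (n i x))) ^ 2)
        ≤ σ ^ 2 * E ^ 2 := hle1
      _ = σ * (σ * E ^ 2) := by ring
      _ ≤ σ * (2 * C9 ^ 2 + 32) := mul_le_mul_of_nonneg_left ht hσ0.le
      _ = (2 * C9 ^ 2 + 32) * σ := mul_comm _ _
  calc ∑ i : Fin I, ∑ j : Fin I,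
        ∫ x in (0:ℝ)..1, ((-σ * Real.log (n j x)) - (-σ * Real.log (n i x))) ^ 2
      ≤ ∑ _i : Fin I, ∑ _j : Fin I, (2 * C9 ^ 2 + 32) * σ :=
        Finset.sum_le_sum (fun i _ => Finset.sum_le_sum (fun j _ => hfinalpair i j))
    _ = (I : ℝ) ^ 2 * ((2 * C9 ^ 2 + 32) * σ) := by
        simp [Finset.sum_const, Finset.card_univ]
        ring
    _ ≤ ((I : ℝ) ^ 2 * (2 * C9 ^ 2 + 32) + 1) * σ := by nlinarith [hσ0]
end

section
/- Suppose σ_n → 0 is a sequence of positive numbers, (n_1^{σ_n},…,n_I^{σ_n}) is a solution of (FP_{σ_n}) for each n, and there is a continuous function R : [0,1] → ℝ such that for every i = 1,…,I the phase functions R_i^{σ_n} := −σ_n ln n_i^{σ_n} converge uniformly on [0,1] to R. Then R is a viscosity solution of the Hamilton–Jacobi equation |R'|² + max_{1≤i≤I} (−ψ_i' R') = 0 in (0,1); explicitly: for every C¹ function Φ : (0,1) → ℝ and every local maximum point x₀ ∈ (0,1) of R − Φ one has (Φ'(x₀))² + max_{1≤i≤I} (−ψ_i'(x₀) Φ'(x₀))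 ≤ 0, and for every local minimum point x₀ ∈ (0,1) of R − Φ one has (Φ'(x₀))² + max_{1≤i≤I} (−ψ_i'(x₀) Φ'(x₀)) ≥ 0. -/
open Real Set MeasureTheory Filter

/-- Second derivative test (necessary condition) at a local max. -/
lemma fp_deriv2_nonpos {f f' : ℝ → ℝ} {a c : ℝ}
    (hf : ∀ᶠ x in nhds a, HasDerivAt f (f' x) x)
    (hf' : HasDerivAt f' c a) (hmax : IsLocalMax f a) : c ≤ 0 := by
  have hfa : f' a = 0 := by
    have h1 := (hf.self_of_nhds).deriv
    have h2 := hmax.deriv_eq_zero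
    rw [← h1, h2]
  by_contra hc
  push_neg at hc
  have hslope : Tendsto (slope f' a) (nhdsWithin a {a}ᶜ) (nhds c) :=
    hasDerivAt_iff_tendsto_slope.mp hf'
  have h1 : ∀ᶠ x in nhdsWithin a {a}ᶜ, c/2 < slope f' a x :=
    hslope.eventually (eventually_gt_nhds (by linarith))
  have h1' : ∀ᶠ x in nhds a, x ≠ a → c/2 < slope f' a x := by
    have := eventually_nhdsWithin_iff.mp h1
    filter_upwards [this] with x hx hxa
    exact hx hxa
  obtain ⟨η, hη, hball⟩ := Metric.eventually_nhds_iff.mp ((hf.and hmax).and h1')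
  obtain ⟨b, hb⟩ : ∃ b, b = a + η/2 := ⟨_, rfl⟩
  have hab : a < b := by rw [hb]; linarith
  have hmem : ∀ x ∈ Icc a b, dist x a < η := by
    intro x hx
    rw [Real.dist_eq, abs_lt]
    obtain ⟨h1, h2⟩ := hx
    constructor
    · linarith
    · linarith [hb.le, hb.ge]
  have hpos : ∀ x ∈ interior (Icc a b), 0 < deriv f x := by
    intro x hx
    rw [interior_Icc] at hx
    have hd := hball (hmem x ⟨le_of_lt hx.1, le_of_lt hx.2⟩)
    have hx' : x ≠ a := ne_of_gt hx.1
    have hsl := hd.2 hx'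
    have : 0 < f' x := by
      have : slope f' a x = f' x / (x - a) := by
        rw [slope_def_field, hfa]; ring
      rw [this] at hsl
      have hxa : 0 < x - a := by linarith [hx.1]
      have := (lt_div_iff₀ hxa).mp hsl
      nlinarith [mul_pos (half_pos hc) hxa]
    rw [hd.1.1.deriv]; exact this
  have hcont : ContinuousOn f (Icc a b) := fun x hx =>
    ((hball (hmem x hx)).1.1.differentiableAt.continuousAt).continuousWithinAt
  have hmono := strictMonoOn_of_deriv_pos (convex_Icc a b) hcont hpos
  have hlt : f a < f b := hmono (left_mem_Icc.mpr hab.le) (right_mem_Icc.mpr hab.le) hab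
  have hle : f b ≤ f a := (hball (hmem b (right_mem_Icc.mpr hab.le))).1.2
  linarith

lemma fp_deriv2_nonneg {f f' : ℝ → ℝ} {a c : ℝ}
    (hf : ∀ᶠ x in nhds a, HasDerivAt f (f' x) x)
    (hf' : HasDerivAt f' c a) (hmin : IsLocalMin f a) : 0 ≤ c := by
  have := fp_deriv2_nonpos (f := fun x => -f x) (f' := fun x => -f' x) (c := -c)
    (by filter_upwards [hf] with x hx; exact hx.neg) hf'.neg hmin.neg
  linarith

/-- Max points of uniformly convergent functions converge to a strict max point. -/
lemma fp_tendsto_argmax {K : Set ℝ} (hK : IsCompact K) {g : ℝ → ℝ}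
    (hg : ContinuousOn g K) {y₀ : ℝ} (hy₀ : y₀ ∈ K)
    (hstrict : ∀ x ∈ K, x ≠ y₀ → g x < g y₀)
    {v : ℕ → ℝ → ℝ} (hv : TendstoUniformlyOn v g atTop K)
    {y : ℕ → ℝ} (hy : ∀ m, y m ∈ K) (hmax : ∀ m, ∀ x ∈ K, v m x ≤ v m (y m)) :
    Tendsto y atTop (nhds y₀) := by
  rw [Metric.tendsto_atTop]
  intro ε hε
  set K' := K ∩ {x | ε ≤ dist x y₀} with hK'
  by_cases hne : K'.Nonempty
  · have hK'c : IsCompact K' := hK.inter_right (isClosed_le continuous_const (continuous_id.dist continuous_const))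
    obtain ⟨z, hz, hzmax⟩ := hK'c.exists_isMaxOn hne (hg.mono inter_subset_left)
    have hzK : z ∈ K := hz.1
    have hzne : z ≠ y₀ := by
      intro h; rw [h] at hz; have := hz.2; simp at this; linarith
    have hzlt : g z < g y₀ := hstrict z hzK hzne
    set δ := (g y₀ - g z)/2 with hδ
    have hδpos : 0 < δ := by simp [hδ]; linarith
    have := (Metric.tendstoUniformlyOn_iff.mp hv) δ hδpos
    rw [eventually_atTop] at this
    obtain ⟨N, hN⟩ := this
    refine ⟨N, fun m hm => ?_⟩
    by_contra hcon
    push_neg at hcon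
    have hymK' : y m ∈ K' := ⟨hy m, hcon⟩
    have h1 : dist (g (y m)) (v m (y m)) < δ := hN m hm (y m) (hy m)
    have h2 : dist (g y₀) (v m y₀) < δ := hN m hm y₀ hy₀
    have h3 : v m (y m) < g (y m) + δ := by
      rw [Real.dist_eq, abs_lt] at h1; linarith [h1.1]
    have h4 : v m y₀ > g y₀ - δ := by
      rw [Real.dist_eq, abs_lt] at h2; linarith [h2.2]
    have h5 : g (y m) ≤ g z := hzmax hymK'
    have h6 : v m y₀ ≤ v m (y m) := hmax m y₀ hy₀
    have : g z = g y₀ - 2*δ := by rw [hδ]; ring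
    linarith
  · rw [Set.not_nonempty_iff_eq_empty] at hne
    refine ⟨0, fun m _ => ?_⟩
    by_contra hcon
    push_neg at hcon
    have : y m ∈ K' := ⟨hy m, hcon⟩
    rw [hne] at this
    exact this

lemma fp_exists_const_subseq {α : Type*} [Finite α] [Nonempty α] (f : ℕ → α) :
    ∃ a : α, ∃ g : ℕ → ℕ, StrictMono g ∧ ∀ k, f (g k) = a := by
  have : ∃ a, ∃ᶠ m in atTop, f m = a := by
    by_contra h
    push_neg at h
    have h2 : ∀ a, ∀ᶠ m in atTop, f m ≠ a := fun a => (h a)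
    have h3 : ∀ᶠ m in atTop, ∀ a, f m ≠ a := eventually_all.mpr h2
    obtain ⟨m, hm⟩ := h3.exists
    exact hm (f m) rfl
  obtain ⟨a, ha⟩ := this
  obtain ⟨g, hg, hga⟩ := Filter.extraction_of_frequently_atTop ha
  exact ⟨a, g, hg, hga⟩

lemma fp_unif_inf' {I : ℕ} [NeZero I] {F : ℕ → Fin I → ℝ → ℝ} {f : ℝ → ℝ} {s : Set ℝ}
    (h : ∀ i, TendstoUniformlyOn (fun m x => F m i x) f atTop s) :
    TendstoUniformlyOn
      (fun m x => Finset.univ.inf' Finset.univ_nonempty (fun i => F m i x)) f atTop s := by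
  rw [Metric.tendstoUniformlyOn_iff]
  intro ε hε
  have hall : ∀ i : Fin I, ∀ᶠ m in atTop, ∀ x ∈ s, dist (f x) (F m i x) < ε :=
    fun i => (Metric.tendstoUniformlyOn_iff.mp (h i)) ε hε
  filter_upwards [eventually_all.mpr hall] with m hm x hx
  obtain ⟨i₀, _, hi₀⟩ := Finset.exists_mem_eq_inf' (Finset.univ_nonempty) (fun i => F m i x)
  rw [hi₀]
  exact hm i₀ x hx

lemma fp_diff_deriv {f : ℝ → ℝ} (hf : ContDiff ℝ 2 f) : Differentiable ℝ (deriv f) := by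
  have h := contDiff_succ_iff_deriv (n := 1) (f := f)
  rw [show ((1: WithTop ℕ∞) + 1) = 2 by norm_num] at h
  exact ((h.mp hf).2.2).differentiable one_ne_zero

lemma fp_calc_max {N : ℝ → ℝ} (hN : ContDiff ℝ 2 N) {σ : ℝ} (hσ : 0 < σ)
    {φ g g' : ℝ → ℝ} (hφg : ∀ x, HasDerivAt φ (g x) x)
    (hgg' : ∀ x, HasDerivAt g (g' x) x)
    {y : ℝ} (hNy : 0 < N y)
    (hloc : IsLocalMax (fun x => -σ * Real.log (N x) - φ x) y) :
    σ * deriv N y = -(g y * N y) ∧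
    -σ * (deriv (deriv N) y * N y - deriv N y * deriv N y) ≤ g' y * (N y)^2 := by
  have hNd : Differentiable ℝ N := hN.differentiable (by norm_num)
  have hN'd : Differentiable ℝ (deriv N) := fp_diff_deriv hN
  have hU : ∀ᶠ x in nhds y, 0 < N x :=
    (hN.continuous.continuousAt).eventually (eventually_gt_nhds hNy)
  have hD : ∀ᶠ x in nhds y,
      HasDerivAt (fun z => -σ * Real.log (N z) - φ z) (-σ * (deriv N x / N x) - g x) x := by
    filter_upwards [hU] with x hx
    exact (((hNd x).hasDerivAt.log (ne_of_gt hx)).const_mul (-σ)).sub (hφg x)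
  have h2nd : HasDerivAt (fun x => -σ * (deriv N x / N x) - g x)
      (-σ * ((deriv (deriv N) y * N y - deriv N y * deriv N y) / (N y)^2) - g' y) y :=
    ((((hN'd y).hasDerivAt).div ((hNd y).hasDerivAt) (ne_of_gt hNy)).const_mul (-σ)).sub
      (hgg' y)
  have h0 : -σ * (deriv N y / N y) - g y = 0 := by
    rw [← (hD.self_of_nhds).deriv]
    exact hloc.deriv_eq_zero
  have hcle := fp_deriv2_nonpos hD h2nd hloc
  constructor
  · field_simp at h0
    linarith
  · have h3 : (-σ * (deriv (deriv N) y * N y - deriv N y * deriv N y)) / (N y)^2 ≤ g' y := by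
      rw [mul_div_assoc]
      linarith
    exact (div_le_iff₀ (pow_pos hNy 2)).mp h3

lemma fp_calc_min {N : ℝ → ℝ} (hN : ContDiff ℝ 2 N) {σ : ℝ} (hσ : 0 < σ)
    {φ g g' : ℝ → ℝ} (hφg : ∀ x, HasDerivAt φ (g x) x)
    (hgg' : ∀ x, HasDerivAt g (g' x) x)
    {y : ℝ} (hNy : 0 < N y)
    (hloc : IsLocalMin (fun x => -σ * Real.log (N x) - φ x) y) :
    σ * deriv N y = -(g y * N y) ∧
    g' y * (N y)^2 ≤ -σ * (deriv (deriv N) y * N y - deriv N y * deriv N y) := by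
  have hNd : Differentiable ℝ N := hN.differentiable (by norm_num)
  have hN'd : Differentiable ℝ (deriv N) := fp_diff_deriv hN
  have hU : ∀ᶠ x in nhds y, 0 < N x :=
    (hN.continuous.continuousAt).eventually (eventually_gt_nhds hNy)
  have hD : ∀ᶠ x in nhds y,
      HasDerivAt (fun z => -σ * Real.log (N z) - φ z) (-σ * (deriv N x / N x) - g x) x := by
    filter_upwards [hU] with x hx
    exact (((hNd x).hasDerivAt.log (ne_of_gt hx)).const_mul (-σ)).sub (hφg x)
  have h2nd : HasDerivAt (fun x => -σ * (deriv N x / N x) - g x)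
      (-σ * ((deriv (deriv N) y * N y - deriv N y * deriv N y) / (N y)^2) - g' y) y :=
    ((((hN'd y).hasDerivAt).div ((hNd y).hasDerivAt) (ne_of_gt hNy)).const_mul (-σ)).sub
      (hgg' y)
  have h0 : -σ * (deriv N y / N y) - g y = 0 := by
    rw [← (hD.self_of_nhds).deriv]
    exact hloc.deriv_eq_zero
  have hcle := fp_deriv2_nonneg hD h2nd hloc
  constructor
  · field_simp at h0
    linarith
  · have h3 : g' y ≤ (-σ * (deriv (deriv N) y * N y - deriv N y * deriv N y)) / (N y)^2 := by
      rw [mul_div_assoc]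
      linarith
    exact (le_div_iff₀ (pow_pos hNy 2)).mp h3

lemma fp_key_max {I : ℕ} {ψ : Fin I → ℝ → ℝ} {ν : Fin I → Fin I → ℝ}
    (hψ : ∀ i, ContDiff ℝ 2 (ψ i)) (hν : ∀ i j, i ≠ j → 0 < ν i j)
    {σ : ℝ} (hσ : 0 < σ) {nn : Fin I → ℝ → ℝ} (hs : IsFPSolution ψ ν σ nn)
    (i : Fin I) {φ g g' : ℝ → ℝ}
    (hφg : ∀ x, HasDerivAt φ (g x) x) (hgg' : ∀ x, HasDerivAt g (g' x) x)
    {y : ℝ} (hy : y ∈ Set.Ioo (0:ℝ) 1)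
    (hloc : IsLocalMax (fun x => -σ * Real.log (nn i x) - φ x) y) :
    (g y)^2 ≤ deriv (ψ i) y * g y + σ * (g' y - deriv (deriv (ψ i)) y + ν i i) := by
  obtain ⟨hC2, hpos, hpde, _⟩ := hs
  have hyIcc : y ∈ Set.Icc (0:ℝ) 1 := ⟨hy.1.le, hy.2.le⟩
  have hNy : 0 < nn i y := hpos i y hyIcc
  obtain ⟨E2, E3⟩ := fp_calc_max (hC2 i) hσ hφg hgg' hNy hloc
  have hpde' := hpde i y hy
  have hprod : deriv (fun x => deriv (ψ i) x * nn i x) y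
      = deriv (deriv (ψ i)) y * nn i y + deriv (ψ i) y * deriv (nn i) y :=
    (((fp_diff_deriv (hψ i)) y).hasDerivAt.mul
      (((hC2 i).differentiable (by norm_num) y).hasDerivAt)).deriv
  rw [hprod] at hpde'
  have hS : 0 ≤ ∑ j ∈ Finset.univ.filter (· ≠ i), ν i j * nn j y := by
    apply Finset.sum_nonneg
    intro j hj
    have hji : j ≠ i := (Finset.mem_filter.mp hj).2
    exact mul_nonneg (hν i j hji.symm).le (hpos j y hyIcc).le
  set a := nn i y with ha'
  set b := deriv (nn i) y with hb'
  set n2 := deriv (deriv (nn i)) y with hn2'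
  set q := g y with hq'
  set G := g' y with hG'
  set P1 := deriv (ψ i) y with hP1'
  set P2 := deriv (deriv (ψ i)) y with hP2'
  set V := ν i i with hV'
  set S := ∑ j ∈ Finset.univ.filter (· ≠ i), ν i j * nn j y with hS'
  -- hpde' : -σ * n2 - (P2 * a + P1 * b) + V * a = S
  have F : σ * (-σ * (n2 * a - b * b)) ≤ σ * (G * a^2) :=
    mul_le_mul_of_nonneg_left E3 hσ.le
  have H : -(σ^2) * (n2 * a) - σ * P2 * a^2 - σ * P1 * b * a + σ * V * a^2 = σ * S * a := by
    linear_combination (σ * a) * hpde'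
  have G2 : σ * P1 * b * a = -(P1 * q * a^2) := by
    linear_combination (P1 * a) * E2
  have G3 : σ^2 * (b * b) = q^2 * a^2 := by
    linear_combination (σ * b - q * a) * E2
  have mulS : 0 ≤ σ * S * a := mul_nonneg (mul_nonneg hσ.le hS) hNy.le
  have key : q^2 * a^2 ≤ (P1 * q + σ * (G - P2 + V)) * a^2 := by nlinarith [F, H, G2, G3, mulS]
  exact le_of_mul_le_mul_right key (pow_pos hNy 2)

lemma fp_key_min {I : ℕ} {ψ : Fin I → ℝ → ℝ} {ν : Fin I → Fin I → ℝ}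
    (hψ : ∀ i, ContDiff ℝ 2 (ψ i)) (hν : ∀ i j, i ≠ j → 0 < ν i j)
    {σ : ℝ} (hσ : 0 < σ) {nn : Fin I → ℝ → ℝ} (hs : IsFPSolution ψ ν σ nn)
    (i : Fin I) {φ g g' : ℝ → ℝ}
    (hφg : ∀ x, HasDerivAt φ (g x) x) (hgg' : ∀ x, HasDerivAt g (g' x) x)
    {y : ℝ} (hy : y ∈ Set.Ioo (0:ℝ) 1)
    (hsmall : ∀ j, nn j y ≤ nn i y)
    (hloc : IsLocalMin (fun x => -σ * Real.log (nn i x) - φ x) y) :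
    deriv (ψ i) y * g y + σ * (g' y - deriv (deriv (ψ i)) y + ν i i
        - ∑ j ∈ Finset.univ.filter (· ≠ i), ν i j) ≤ (g y)^2 := by
  obtain ⟨hC2, hpos, hpde, _⟩ := hs
  have hyIcc : y ∈ Set.Icc (0:ℝ) 1 := ⟨hy.1.le, hy.2.le⟩
  have hNy : 0 < nn i y := hpos i y hyIcc
  obtain ⟨E2, E3⟩ := fp_calc_min (hC2 i) hσ hφg hgg' hNy hloc
  have hpde' := hpde i y hy
  have hprod : deriv (fun x => deriv (ψ i) x * nn i x) y
      = deriv (deriv (ψ i)) y * nn i y + deriv (ψ i) y * deriv (nn i) y :=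
    (((fp_diff_deriv (hψ i)) y).hasDerivAt.mul
      (((hC2 i).differentiable (by norm_num) y).hasDerivAt)).deriv
  rw [hprod] at hpde'
  have hST : ∑ j ∈ Finset.univ.filter (· ≠ i), ν i j * nn j y
      ≤ (∑ j ∈ Finset.univ.filter (· ≠ i), ν i j) * nn i y := by
    rw [Finset.sum_mul]
    apply Finset.sum_le_sum
    intro j hj
    have hji : j ≠ i := (Finset.mem_filter.mp hj).2
    exact mul_le_mul_of_nonneg_left (hsmall j) (hν i j hji.symm).le
  set a := nn i y with ha'
  set b := deriv (nn i) y with hb'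
  set n2 := deriv (deriv (nn i)) y with hn2'
  set q := g y with hq'
  set G := g' y with hG'
  set P1 := deriv (ψ i) y with hP1'
  set P2 := deriv (deriv (ψ i)) y with hP2'
  set V := ν i i with hV'
  set S := ∑ j ∈ Finset.univ.filter (· ≠ i), ν i j * nn j y with hS'
  set T := ∑ j ∈ Finset.univ.filter (· ≠ i), ν i j with hT'
  have F : σ * (G * a^2) ≤ σ * (-σ * (n2 * a - b * b)) :=
    mul_le_mul_of_nonneg_left E3 hσ.le
  have H : -(σ^2) * (n2 * a) - σ * P2 * a^2 - σ * P1 * b * a + σ * V * a^2 = σ * S * a := by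
    linear_combination (σ * a) * hpde'
  have G2 : σ * P1 * b * a = -(P1 * q * a^2) := by
    linear_combination (P1 * a) * E2
  have G3 : σ^2 * (b * b) = q^2 * a^2 := by
    linear_combination (σ * b - q * a) * E2
  have mulS : σ * S * a ≤ σ * T * a^2 := by
    have h1 := mul_le_mul_of_nonneg_right (mul_le_mul_of_nonneg_left hST hσ.le) hNy.le
    nlinarith [h1]
  have key : (P1 * q + σ * (G - P2 + V - T)) * a^2 ≤ q^2 * a^2 := by
    nlinarith [F, H, G2, G3, mulS]
  exact le_of_mul_le_mul_right key (pow_pos hNy 2)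

-- helpers
lemma fp_tuo_sub {F : ℕ → ℝ → ℝ} {f φ : ℝ → ℝ} {s : Set ℝ}
    (h : TendstoUniformlyOn F f atTop s) :
    TendstoUniformlyOn (fun m x => F m x - φ x) (fun x => f x - φ x) atTop s := by
  rw [Metric.tendstoUniformlyOn_iff] at h ⊢
  intro ε hε
  filter_upwards [h ε hε] with m hm x hx
  rw [dist_sub_right]
  exact hm x hx

lemma fp_cont2_deriv2 {f : ℝ → ℝ} (hf : ContDiff ℝ 2 f) : Continuous (deriv (deriv f)) := by
  have h := contDiff_succ_iff_deriv (n := 1) (f := f)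
  rw [show ((1: WithTop ℕ∞) + 1) = 2 by norm_num] at h
  exact ((h.mp hf).2.2).continuous_deriv le_rfl

lemma fp_smooth_max {I : ℕ} [NeZero I] {ψ : Fin I → ℝ → ℝ} {ν : Fin I → Fin I → ℝ}
    (hψ : ∀ i, ContDiff ℝ 2 (ψ i)) (hν : ∀ i j, i ≠ j → 0 < ν i j)
    {σs : ℕ → ℝ} (hσs : ∀ m, 0 < σs m) (hσs0 : Tendsto σs atTop (nhds 0))
    {n : ℕ → Fin I → ℝ → ℝ} (hn : ∀ m, IsFPSolution ψ ν (σs m) (n m))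
    {R : ℝ → ℝ} (hR : ContinuousOn R (Set.Icc 0 1))
    (hconv : ∀ i, TendstoUniformlyOn (fun m x => -(σs m) * Real.log (n m i x)) R atTop
      (Set.Icc 0 1))
    {φ g g' : ℝ → ℝ} (hφg : ∀ x, HasDerivAt φ (g x) x)
    (hgg' : ∀ x, HasDerivAt g (g' x) x) (hg'c : Continuous g')
    {y₀ r : ℝ} (hr : 0 < r) (hsub : Set.Icc (y₀ - r) (y₀ + r) ⊆ Set.Ioo 0 1)
    (hstrict : ∀ x ∈ Set.Icc (y₀ - r) (y₀ + r), x ≠ y₀ → R x - φ x < R y₀ - φ y₀)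
    (i : Fin I) : (g y₀)^2 ≤ deriv (ψ i) y₀ * g y₀ := by
  set B := Set.Icc (y₀ - r) (y₀ + r) with hB
  have hBIcc : B ⊆ Set.Icc (0:ℝ) 1 := fun x hx => Ioo_subset_Icc_self (hsub hx)
  have hy₀B : y₀ ∈ B := by
    constructor <;> simp <;> linarith
  have hφd : Differentiable ℝ φ := fun x => (hφg x).differentiableAt
  have hgd : Differentiable ℝ g := fun x => (hgg' x).differentiableAt
  have hφc : Continuous φ := hφd.continuous
  have hgc : Continuous g := hgd.continuous
  have hucont : ∀ m, ContinuousOn (fun x => -(σs m) * Real.log (n m i x) - φ x) B := by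
    intro m
    apply ContinuousOn.sub _ hφc.continuousOn
    apply ContinuousOn.mul continuousOn_const
    apply ContinuousOn.log (((hn m).1 i).continuous.continuousOn)
    exact fun x hx => ((hn m).2.1 i x (hBIcc hx)).ne'
  have hv : TendstoUniformlyOn (fun m x => -(σs m) * Real.log (n m i x) - φ x)
      (fun x => R x - φ x) atTop B := fp_tuo_sub ((hconv i).mono hBIcc)
  have hsel : ∀ m, ∃ y ∈ B, IsMaxOn (fun x => -(σs m) * Real.log (n m i x) - φ x) B y :=
    fun m => isCompact_Icc.exists_isMaxOn ⟨y₀, hy₀B⟩ (hucont m)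
  choose yseq hyB hymax using hsel
  have hgRφ : ContinuousOn (fun x => R x - φ x) B :=
    (hR.mono hBIcc).sub hφc.continuousOn
  have hylim : Tendsto yseq atTop (nhds y₀) :=
    fp_tendsto_argmax isCompact_Icc hgRφ hy₀B hstrict hv hyB
      (fun m x hx => hymax m hx)
  have hev : ∀ᶠ m in atTop, yseq m ∈ Set.Ioo (y₀ - r) (y₀ + r) :=
    hylim (Ioo_mem_nhds (by linarith) (by linarith))
  have hkey : ∀ᶠ m in atTop, (g (yseq m))^2 ≤ deriv (ψ i) (yseq m) * g (yseq m)
      + σs m * (g' (yseq m) - deriv (deriv (ψ i)) (yseq m) + ν i i) := by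
    filter_upwards [hev] with m hm
    have hmIoo : yseq m ∈ Set.Ioo (0:ℝ) 1 := hsub ⟨hm.1.le, hm.2.le⟩
    have hloc : IsLocalMax (fun x => -(σs m) * Real.log (n m i x) - φ x) (yseq m) :=
      (hymax m).isLocalMax (Icc_mem_nhds hm.1 hm.2)
    exact fp_key_max hψ hν (hσs m) (hn m) i hφg hgg' hmIoo hloc
  have hψ1c : Continuous (deriv (ψ i)) := (hψ i).continuous_deriv (by norm_num)
  have hψ2c : Continuous (deriv (deriv (ψ i))) := fp_cont2_deriv2 (hψ i)
  have L1 : Tendsto (fun m => (g (yseq m))^2) atTop (nhds ((g y₀)^2)) :=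
    ((hgc.tendsto y₀).comp hylim).pow 2
  have L2 : Tendsto (fun m => deriv (ψ i) (yseq m) * g (yseq m)
      + σs m * (g' (yseq m) - deriv (deriv (ψ i)) (yseq m) + ν i i)) atTop
      (nhds (deriv (ψ i) y₀ * g y₀
        + 0 * (g' y₀ - deriv (deriv (ψ i)) y₀ + ν i i))) := by
    apply Tendsto.add
    · exact ((hψ1c.tendsto y₀).comp hylim).mul ((hgc.tendsto y₀).comp hylim)
    · exact hσs0.mul ((((hg'c.tendsto y₀).comp hylim).sub
        ((hψ2c.tendsto y₀).comp hylim)).add tendsto_const_nhds)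
  rw [show deriv (ψ i) y₀ * g y₀ + 0 * (g' y₀ - deriv (deriv (ψ i)) y₀ + ν i i)
      = deriv (ψ i) y₀ * g y₀ by ring] at L2
  exact le_of_tendsto_of_tendsto L1 L2 hkey

lemma fp_smooth_min {I : ℕ} [NeZero I] {ψ : Fin I → ℝ → ℝ} {ν : Fin I → Fin I → ℝ}
    (hψ : ∀ i, ContDiff ℝ 2 (ψ i)) (hν : ∀ i j, i ≠ j → 0 < ν i j)
    {σs : ℕ → ℝ} (hσs : ∀ m, 0 < σs m) (hσs0 : Tendsto σs atTop (nhds 0))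
    {n : ℕ → Fin I → ℝ → ℝ} (hn : ∀ m, IsFPSolution ψ ν (σs m) (n m))
    {R : ℝ → ℝ} (hR : ContinuousOn R (Set.Icc 0 1))
    (hconv : ∀ i, TendstoUniformlyOn (fun m x => -(σs m) * Real.log (n m i x)) R atTop
      (Set.Icc 0 1))
    {φ g g' : ℝ → ℝ} (hφg : ∀ x, HasDerivAt φ (g x) x)
    (hgg' : ∀ x, HasDerivAt g (g' x) x) (hg'c : Continuous g')
    {y₀ r : ℝ} (hr : 0 < r) (hsub : Set.Icc (y₀ - r) (y₀ + r) ⊆ Set.Ioo 0 1)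
    (hstrict : ∀ x ∈ Set.Icc (y₀ - r) (y₀ + r), x ≠ y₀ → R y₀ - φ y₀ < R x - φ x) :
    ∃ i, deriv (ψ i) y₀ * g y₀ ≤ (g y₀)^2 := by
  have hne : Nonempty (Fin I) := ⟨⟨0, Nat.pos_of_ne_zero (NeZero.ne I)⟩⟩
  set B := Set.Icc (y₀ - r) (y₀ + r) with hB
  have hBIcc : B ⊆ Set.Icc (0:ℝ) 1 := fun x hx => Ioo_subset_Icc_self (hsub hx)
  have hy₀B : y₀ ∈ B := by constructor <;> simp <;> linarith
  have hφd : Differentiable ℝ φ := fun x => (hφg x).differentiableAt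
  have hgd : Differentiable ℝ g := fun x => (hgg' x).differentiableAt
  have hφc : Continuous φ := hφd.continuous
  have hgc : Continuous g := hgd.continuous
  set u : ℕ → Fin I → ℝ → ℝ := fun m j x => -(σs m) * Real.log (n m j x) with hu
  set w : ℕ → ℝ → ℝ := fun m x => Finset.univ.inf' Finset.univ_nonempty (fun j => u m j x)
    with hw
  have hucont : ∀ m j, ContinuousOn (u m j) B := by
    intro m j
    apply ContinuousOn.mul continuousOn_const
    apply ContinuousOn.log (((hn m).1 j).continuous.continuousOn)
    exact fun x hx => ((hn m).2.1 j x (hBIcc hx)).ne'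
  have hwcont : ∀ m, ContinuousOn (fun x => φ x - w m x) B := by
    intro m
    apply hφc.continuousOn.sub
    apply ContinuousOn.finset_inf'_apply
    exact fun j _ => hucont m j
  have hwconv : TendstoUniformlyOn w R atTop B :=
    fp_unif_inf' (fun j => (hconv j).mono hBIcc)
  have hv : TendstoUniformlyOn (fun m x => φ x - w m x) (fun x => φ x - R x) atTop B := by
    have h1 := fp_tuo_sub (φ := fun x => φ x) hwconv
    rw [Metric.tendstoUniformlyOn_iff] at h1 ⊢
    intro ε hε
    filter_upwards [h1 ε hε] with m hm x hx
    have := hm x hx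
    rw [Real.dist_eq] at *
    rwa [show φ x - R x - (φ x - w m x) = -(R x - φ x - (w m x - φ x)) by ring, abs_neg]
  have hsel : ∀ m, ∃ y ∈ B, IsMaxOn (fun x => φ x - w m x) B y :=
    fun m => isCompact_Icc.exists_isMaxOn ⟨y₀, hy₀B⟩ (hwcont m)
  choose yseq hyB hymax using hsel
  have hgRφ : ContinuousOn (fun x => φ x - R x) B :=
    hφc.continuousOn.sub (hR.mono hBIcc)
  have hstrict' : ∀ x ∈ B, x ≠ y₀ → φ x - R x < φ y₀ - R y₀ := by
    intro x hx hxne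
    have := hstrict x hx hxne
    linarith
  have hylim : Tendsto yseq atTop (nhds y₀) :=
    fp_tendsto_argmax isCompact_Icc hgRφ hy₀B hstrict' hv hyB (fun m x hx => hymax m hx)
  -- index choice
  have hidx : ∀ m, ∃ j : Fin I, w m (yseq m) = u m j (yseq m) := by
    intro m
    obtain ⟨j, _, hj⟩ := Finset.exists_mem_eq_inf' (Finset.univ_nonempty (α := Fin I))
      (fun j => u m j (yseq m))
    exact ⟨j, hj⟩
  choose idx hidxeq using hidx
  have hev : ∀ᶠ m in atTop, yseq m ∈ Set.Ioo (y₀ - r) (y₀ + r) :=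
    hylim (Ioo_mem_nhds (by linarith) (by linarith))
  have hkey : ∀ᶠ m in atTop, deriv (ψ (idx m)) (yseq m) * g (yseq m)
      + σs m * (g' (yseq m) - deriv (deriv (ψ (idx m))) (yseq m) + ν (idx m) (idx m)
        - ∑ j ∈ Finset.univ.filter (· ≠ idx m), ν (idx m) j) ≤ (g (yseq m))^2 := by
    filter_upwards [hev] with m hm
    have hmIoo : yseq m ∈ Set.Ioo (0:ℝ) 1 := hsub ⟨hm.1.le, hm.2.le⟩
    have hmin : IsMinOn (fun x => u m (idx m) x - φ x) B (yseq m) := by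
      intro x hx
      have h1 : φ x - w m x ≤ φ (yseq m) - w m (yseq m) := hymax m hx
      have h2 : w m x ≤ u m (idx m) x := Finset.inf'_le _ (Finset.mem_univ _)
      have h3 : w m (yseq m) = u m (idx m) (yseq m) := hidxeq m
      simp only [Set.mem_setOf_eq]
      linarith
    have hloc : IsLocalMin (fun x => -(σs m) * Real.log (n m (idx m) x) - φ x) (yseq m) :=
      hmin.isLocalMin (Icc_mem_nhds hm.1 hm.2)
    have hsmall : ∀ j, n m j (yseq m) ≤ n m (idx m) (yseq m) := by
      intro j
      have h2 : u m (idx m) (yseq m) ≤ u m j (yseq m) := by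
        rw [← hidxeq m]
        exact Finset.inf'_le _ (Finset.mem_univ _)
      have hpos1 : 0 < n m j (yseq m) := (hn m).2.1 j _ (hBIcc ⟨hm.1.le, hm.2.le⟩)
      have hpos2 : 0 < n m (idx m) (yseq m) := (hn m).2.1 (idx m) _ (hBIcc ⟨hm.1.le, hm.2.le⟩)
      have hlog : Real.log (n m j (yseq m)) ≤ Real.log (n m (idx m) (yseq m)) := by
        simp only [hu] at h2
        nlinarith [hσs m]
      exact (Real.log_le_log_iff hpos1 hpos2).mp hlog
    exact fp_key_min hψ hν (hσs m) (hn m) (idx m) hφg hgg' hmIoo hsmall hloc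
  -- pigeonhole
  obtain ⟨i, sub, hsubmono, hsubi⟩ := fp_exists_const_subseq idx
  refine ⟨i, ?_⟩
  have hsubtop : Tendsto sub atTop atTop := hsubmono.tendsto_atTop
  have hylim' : Tendsto (fun k => yseq (sub k)) atTop (nhds y₀) := hylim.comp hsubtop
  have hσs0' : Tendsto (fun k => σs (sub k)) atTop (nhds 0) := hσs0.comp hsubtop
  have hkey' : ∀ᶠ k in atTop, deriv (ψ i) (yseq (sub k)) * g (yseq (sub k))
      + σs (sub k) * (g' (yseq (sub k)) - deriv (deriv (ψ i)) (yseq (sub k)) + ν i i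
        - ∑ j ∈ Finset.univ.filter (· ≠ i), ν i j) ≤ (g (yseq (sub k)))^2 := by
    filter_upwards [hsubtop.eventually hkey] with k hk
    rw [hsubi k] at hk
    exact hk
  have hψ1c : Continuous (deriv (ψ i)) := (hψ i).continuous_deriv (by norm_num)
  have hψ2c : Continuous (deriv (deriv (ψ i))) := fp_cont2_deriv2 (hψ i)
  have L1 : Tendsto (fun k => (g (yseq (sub k)))^2) atTop (nhds ((g y₀)^2)) :=
    ((hgc.tendsto y₀).comp hylim').pow 2
  have L2 : Tendsto (fun k => deriv (ψ i) (yseq (sub k)) * g (yseq (sub k))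
      + σs (sub k) * (g' (yseq (sub k)) - deriv (deriv (ψ i)) (yseq (sub k)) + ν i i
        - ∑ j ∈ Finset.univ.filter (· ≠ i), ν i j)) atTop
      (nhds (deriv (ψ i) y₀ * g y₀
        + 0 * (g' y₀ - deriv (deriv (ψ i)) y₀ + ν i i
          - ∑ j ∈ Finset.univ.filter (· ≠ i), ν i j))) := by
    apply Tendsto.add
    · exact ((hψ1c.tendsto y₀).comp hylim').mul ((hgc.tendsto y₀).comp hylim')
    · exact hσs0'.mul (((((hg'c.tendsto y₀).comp hylim').sub
        ((hψ2c.tendsto y₀).comp hylim')).add tendsto_const_nhds).sub tendsto_const_nhds)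
  rw [show deriv (ψ i) y₀ * g y₀ + 0 * (g' y₀ - deriv (deriv (ψ i)) y₀ + ν i i
      - ∑ j ∈ Finset.univ.filter (· ≠ i), ν i j) = deriv (ψ i) y₀ * g y₀ by ring] at L2
  exact le_of_tendsto_of_tendsto L2 L1 hkey'


set_option maxHeartbeats 2000000 in
/-- The uniform limit `R` of the phase functions is a viscosity solution of
`|R'|² + max_i (-ψ_i' R') = 0` in `(0,1)`. -/
theorem fp_viscosity_solution {I : ℕ} [NeZero I]
    (ψ : Fin I → ℝ → ℝ) (ν : Fin I → Fin I → ℝ)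
    (hψ : ∀ i, ContDiff ℝ 2 (ψ i))
    (hψL : ∀ i, ∃ L : NNReal, LipschitzOnWith L (deriv (deriv (ψ i))) (Set.Icc 0 1))
    (hν : ∀ i j, i ≠ j → 0 < ν i j)
    (hνd : ∀ i, ν i i = ∑ j ∈ Finset.univ.filter (· ≠ i), ν j i)
    (σs : ℕ → ℝ) (hσs : ∀ m, 0 < σs m) (hσs0 : Tendsto σs atTop (nhds 0))
    (n : ℕ → Fin I → ℝ → ℝ) (hn : ∀ m, IsFPSolution ψ ν (σs m) (n m))
    (R : ℝ → ℝ) (hR : ContinuousOn R (Set.Icc 0 1))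
    (hconv : ∀ i : Fin I,
      TendstoUniformlyOn (fun m x => -(σs m) * Real.log (n m i x)) R atTop
        (Set.Icc 0 1)) :
    ∀ Φ : ℝ → ℝ, (∀ x ∈ Set.Ioo (0:ℝ) 1, DifferentiableAt ℝ Φ x) →
      ContinuousOn (deriv Φ) (Set.Ioo 0 1) →
      ∀ x₀ ∈ Set.Ioo (0:ℝ) 1,
        (IsLocalMax (fun x => R x - Φ x) x₀ →
          (deriv Φ x₀) ^ 2 + (⨆ i, -deriv (ψ i) x₀ * deriv Φ x₀) ≤ 0) ∧
        (IsLocalMin (fun x => R x - Φ x) x₀ →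
          0 ≤ (deriv Φ x₀) ^ 2 + (⨆ i, -deriv (ψ i) x₀ * deriv Φ x₀)) := by
  intro Φ hΦd hΦ'c x₀ hx₀
  haveI : Nonempty (Fin I) := ⟨⟨0, Nat.pos_of_ne_zero (NeZero.ne I)⟩⟩
  have hp : HasDerivAt Φ (deriv Φ x₀) x₀ := (hΦd x₀ hx₀).hasDerivAt
  set p := deriv Φ x₀ with hpdef
  have hψ1c : ∀ i, Continuous (deriv (ψ i)) := fun i => (hψ i).continuous_deriv (by norm_num)
  have h0lim : Tendsto (fun k : ℕ => 1/((k:ℝ)+1)) atTop (nhds 0) :=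
    tendsto_one_div_add_atTop_nhds_zero_nat
  constructor
  · -- local max : subsolution inequality
    intro hmax
    have hstep : ∀ k : ℕ, ∃ y q : ℝ, |y - x₀| ≤ 1/((k:ℝ)+1) ∧ |q - p| ≤ 4/((k:ℝ)+1) ∧
        ∀ i, q^2 ≤ deriv (ψ i) y * q := by
      intro k
      set ε := 1/((k:ℝ)+1) with hεdef
      have hεpos : 0 < ε := by positivity
      have E1 : ∀ᶠ x in nhds x₀, R x - Φ x ≤ R x₀ - Φ x₀ := hmax
      have E2 : ∀ᶠ x in nhds x₀, |Φ x - Φ x₀ - (x - x₀) * p| ≤ ε * |x - x₀| := by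
        have := (hasDerivAt_iff_isLittleO.mp hp).bound hεpos
        filter_upwards [this] with x hx
        simpa [Real.norm_eq_abs, smul_eq_mul, mul_comm] using hx
      have E3 : ∀ᶠ x in nhds x₀, x ∈ Set.Ioo (0:ℝ) 1 := isOpen_Ioo.eventually_mem hx₀
      obtain ⟨η, hη, hball⟩ := Metric.eventually_nhds_iff.mp ((E1.and E2).and E3)
      set δ := min (η/2) ε with hδdef
      have hδpos : 0 < δ := lt_min (by linarith) hεpos
      have hδε : δ ≤ ε := min_le_right _ _
      have hin : ∀ x ∈ Set.Icc (x₀ - δ) (x₀ + δ),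
          ((R x - Φ x ≤ R x₀ - Φ x₀ ∧ |Φ x - Φ x₀ - (x - x₀) * p| ≤ ε * |x - x₀|)
            ∧ x ∈ Set.Ioo (0:ℝ) 1) := by
        intro x hx
        apply hball
        rw [Real.dist_eq]
        have h1 : |x - x₀| ≤ δ := abs_le.mpr ⟨by linarith [hx.1], by linarith [hx.2]⟩
        have h2 : δ ≤ η/2 := min_le_left _ _
        linarith
      have hx₀I : x₀ ∈ Set.Icc (x₀ - δ) (x₀ + δ) := by
        constructor <;> linarith
      have hRu : ∀ x ∈ Set.Icc (x₀ - δ) (x₀ + δ),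
          R x ≤ R x₀ + p*(x - x₀) + ε*|x - x₀| := by
        intro x hx
        obtain ⟨⟨h1, h2⟩, _⟩ := hin x hx
        have h3 := (abs_le.mp h2).2
        linarith
      set c := 2*ε/δ with hcdef
      have hcpos : 0 < c := by positivity
      have hRcont : ContinuousOn (fun x => R x - (p*(x - x₀) + c*(x - x₀)^2))
          (Set.Icc (x₀ - δ) (x₀ + δ)) := by
        apply ContinuousOn.sub
        · exact hR.mono (fun x hx => Ioo_subset_Icc_self (hin x hx).2)
        · exact Continuous.continuousOn (by fun_prop)
      obtain ⟨y, hyI, hymax⟩ := isCompact_Icc.exists_isMaxOn ⟨x₀, hx₀I⟩ hRcont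
      have hyIoo : y ∈ Set.Ioo (x₀ - δ) (x₀ + δ) := by
        by_contra hy
        have habs : |y - x₀| = δ := by
          rcases lt_or_ge (x₀ - δ) y with hl | hl
          · have h1 : ¬ y < x₀ + δ := fun hcon => hy ⟨hl, hcon⟩
            have h2 : y = x₀ + δ := le_antisymm hyI.2 (not_lt.mp h1)
            rw [h2, add_sub_cancel_left]
            exact abs_of_nonneg hδpos.le
          · have h2 : y = x₀ - δ := le_antisymm hl hyI.1
            rw [h2]
            rw [show x₀ - δ - x₀ = -δ by ring, abs_neg]
            exact abs_of_nonneg hδpos.le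
        have hR1 := hRu y hyI
        rw [habs] at hR1
        have hsq : (y - x₀)^2 = δ^2 := by rw [← sq_abs, habs]
        have hcδ : c*δ^2 = 2*ε*δ := by
          rw [hcdef]
          field_simp
        have hmx := hymax hx₀I
        simp only [Set.mem_setOf_eq, sub_self] at hmx
        have hεδ : 0 < ε*δ := mul_pos hεpos hδpos
        nlinarith [hmx, hR1, hsq, hcδ]
      have hrkpos : 0 < δ - |y - x₀| := by
        have : |y - x₀| < δ := abs_lt.mpr ⟨by linarith [hyIoo.1], by linarith [hyIoo.2]⟩
        linarith
      have ha1 : x₀ - y ≤ |y - x₀| := by rw [abs_sub_comm]; exact le_abs_self _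
      have ha2 : y - x₀ ≤ |y - x₀| := le_abs_self _
      have hsubIcc : Set.Icc (y - (δ - |y - x₀|)) (y + (δ - |y - x₀|))
          ⊆ Set.Icc (x₀ - δ) (x₀ + δ) := by
        intro x hx
        constructor
        · linarith [hx.1]
        · linarith [hx.2]
      have hsubk : Set.Icc (y - (δ - |y - x₀|)) (y + (δ - |y - x₀|)) ⊆ Set.Ioo (0:ℝ) 1 :=
        fun x hx => (hin x (hsubIcc hx)).2
      have hA : ∀ x : ℝ, HasDerivAt (fun z => z - x₀) 1 x :=
        fun x => (hasDerivAt_id x).sub_const x₀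
      have hB : ∀ x : ℝ, HasDerivAt (fun z => z - y) 1 x :=
        fun x => (hasDerivAt_id x).sub_const y
      have hφg : ∀ x, HasDerivAt (fun z => p*(z - x₀) + c*(z - x₀)^2 + (z - y)^2)
          (p + 2*c*(x - x₀) + 2*(x - y)) x := by
        intro x
        have h1 := ((hA x).const_mul p).add (((hA x).pow 2).const_mul c)
        have h2 := h1.add ((hB x).pow 2)
        exact h2.congr_deriv (by ring)
      have hgg' : ∀ x, HasDerivAt (fun z => p + 2*c*(z - x₀) + 2*(z - y)) (2*c + 2) x := by
        intro x
        have h1 := (((hA x).const_mul (2*c)).add ((hB x).const_mul 2)).const_add p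
        have he : (fun z => p + 2*c*(z - x₀) + 2*(z - y))
            = (fun z => p + (2*c*(z - x₀) + 2*(z - y))) := by
          funext z
          ring
        rw [he]
        exact h1.congr_deriv (by ring)
      have hstrictk : ∀ x ∈ Set.Icc (y - (δ - |y - x₀|)) (y + (δ - |y - x₀|)), x ≠ y →
          R x - (p*(x - x₀) + c*(x - x₀)^2 + (x - y)^2)
            < R y - (p*(y - x₀) + c*(y - x₀)^2 + (y - y)^2) := by
        intro x hx hxy
        have h1 := hymax (hsubIcc hx)
        simp only [Set.mem_setOf_eq] at h1
        have h2 : 0 < (x - y)^2 := pow_two_pos_of_ne_zero (sub_ne_zero.mpr hxy)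
        nlinarith [h1, h2]
      have happ := fun i => fp_smooth_max hψ hν hσs hσs0 hn hR hconv hφg hgg'
        continuous_const hrkpos hsubk hstrictk i
      refine ⟨y, p + 2*c*(y - x₀), ?_, ?_, ?_⟩
      · have : |y - x₀| < δ := abs_lt.mpr ⟨by linarith [hyIoo.1], by linarith [hyIoo.2]⟩
        show |y - x₀| ≤ ε
        linarith
      · rw [show p + 2*c*(y - x₀) - p = 2*c*(y - x₀) by ring, abs_mul,
          abs_of_pos (by positivity : (0:ℝ) < 2*c)]
        have h1 : |y - x₀| ≤ δ := by
          have : |y - x₀| < δ := abs_lt.mpr ⟨by linarith [hyIoo.1], by linarith [hyIoo.2]⟩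
          linarith
        have h2 : 2*c*|y - x₀| ≤ 2*c*δ := by nlinarith
        have h3 : 2*c*δ = 4*ε := by
          rw [hcdef]
          field_simp
          ring
        rw [show (4:ℝ)/((k:ℝ)+1) = 4*ε by rw [hεdef]; ring]
        linarith
      · intro i
        have := happ i
        have hq : p + 2*c*(y - x₀) + 2*(y - y) = p + 2*c*(y - x₀) := by ring
        rwa [hq] at this
    choose ys qs hys hqs hineq using hstep
    have hy_lim : Tendsto ys atTop (nhds x₀) := by
      have h1 : Tendsto (fun k => ys k - x₀) atTop (nhds 0) :=
        squeeze_zero_norm (fun k => by simpa [Real.norm_eq_abs] using hys k) h0lim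
      have h2 := h1.add_const x₀
      simpa using h2
    have hq_lim : Tendsto qs atTop (nhds p) := by
      have h0' : Tendsto (fun k : ℕ => 4/((k:ℝ)+1)) atTop (nhds 0) := by
        have := h0lim.const_mul (4:ℝ)
        simpa [mul_one_div, div_eq_mul_inv] using this
      have h1 : Tendsto (fun k => qs k - p) atTop (nhds 0) :=
        squeeze_zero_norm (fun k => by simpa [Real.norm_eq_abs] using hqs k) h0'
      have h2 := h1.add_const p
      simpa using h2
    have claim : ∀ i, p^2 ≤ deriv (ψ i) x₀ * p := by
      intro i
      have L1 : Tendsto (fun k => (qs k)^2) atTop (nhds (p^2)) := hq_lim.pow 2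
      have L2 : Tendsto (fun k => deriv (ψ i) (ys k) * qs k) atTop
          (nhds (deriv (ψ i) x₀ * p)) :=
        (((hψ1c i).tendsto x₀).comp hy_lim).mul hq_lim
      exact le_of_tendsto_of_tendsto L1 L2 (Filter.Eventually.of_forall (fun k => hineq k i))
    have hsup : (⨆ i, -deriv (ψ i) x₀ * p) ≤ -p^2 :=
      ciSup_le (fun i => by nlinarith [claim i])
    linarith
  · -- local min : supersolution inequality
    intro hmin
    have hstep : ∀ k : ℕ, ∃ y q : ℝ, ∃ i : Fin I, |y - x₀| ≤ 1/((k:ℝ)+1) ∧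
        |q - p| ≤ 4/((k:ℝ)+1) ∧ deriv (ψ i) y * q ≤ q^2 := by
      intro k
      set ε := 1/((k:ℝ)+1) with hεdef
      have hεpos : 0 < ε := by positivity
      have E1 : ∀ᶠ x in nhds x₀, R x₀ - Φ x₀ ≤ R x - Φ x := hmin
      have E2 : ∀ᶠ x in nhds x₀, |Φ x - Φ x₀ - (x - x₀) * p| ≤ ε * |x - x₀| := by
        have := (hasDerivAt_iff_isLittleO.mp hp).bound hεpos
        filter_upwards [this] with x hx
        simpa [Real.norm_eq_abs, smul_eq_mul, mul_comm] using hx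
      have E3 : ∀ᶠ x in nhds x₀, x ∈ Set.Ioo (0:ℝ) 1 := isOpen_Ioo.eventually_mem hx₀
      obtain ⟨η, hη, hball⟩ := Metric.eventually_nhds_iff.mp ((E1.and E2).and E3)
      set δ := min (η/2) ε with hδdef
      have hδpos : 0 < δ := lt_min (by linarith) hεpos
      have hδε : δ ≤ ε := min_le_right _ _
      have hin : ∀ x ∈ Set.Icc (x₀ - δ) (x₀ + δ),
          ((R x₀ - Φ x₀ ≤ R x - Φ x ∧ |Φ x - Φ x₀ - (x - x₀) * p| ≤ ε * |x - x₀|)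
            ∧ x ∈ Set.Ioo (0:ℝ) 1) := by
        intro x hx
        apply hball
        rw [Real.dist_eq]
        have h1 : |x - x₀| ≤ δ := abs_le.mpr ⟨by linarith [hx.1], by linarith [hx.2]⟩
        have h2 : δ ≤ η/2 := min_le_left _ _
        linarith
      have hx₀I : x₀ ∈ Set.Icc (x₀ - δ) (x₀ + δ) := by
        constructor <;> linarith
      have hRl : ∀ x ∈ Set.Icc (x₀ - δ) (x₀ + δ),
          R x₀ + p*(x - x₀) - ε*|x - x₀| ≤ R x := by
        intro x hx
        obtain ⟨⟨h1, h2⟩, _⟩ := hin x hx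
        have h3 := (abs_le.mp h2).1
        linarith
      set c := 2*ε/δ with hcdef
      have hcpos : 0 < c := by positivity
      have hRcont : ContinuousOn (fun x => (p*(x - x₀) - c*(x - x₀)^2) - R x)
          (Set.Icc (x₀ - δ) (x₀ + δ)) := by
        apply ContinuousOn.sub
        · exact Continuous.continuousOn (by fun_prop)
        · exact hR.mono (fun x hx => Ioo_subset_Icc_self (hin x hx).2)
      obtain ⟨y, hyI, hymax⟩ := isCompact_Icc.exists_isMaxOn ⟨x₀, hx₀I⟩ hRcont
      have hymin : ∀ x ∈ Set.Icc (x₀ - δ) (x₀ + δ),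
          R y - (p*(y - x₀) - c*(y - x₀)^2) ≤ R x - (p*(x - x₀) - c*(x - x₀)^2) := by
        intro x hx
        have := hymax hx
        simp only [Set.mem_setOf_eq] at this
        linarith
      have hyIoo : y ∈ Set.Ioo (x₀ - δ) (x₀ + δ) := by
        by_contra hy
        have habs : |y - x₀| = δ := by
          rcases lt_or_ge (x₀ - δ) y with hl | hl
          · have h1 : ¬ y < x₀ + δ := fun hcon => hy ⟨hl, hcon⟩
            have h2 : y = x₀ + δ := le_antisymm hyI.2 (not_lt.mp h1)
            rw [h2, add_sub_cancel_left]
            exact abs_of_nonneg hδpos.le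
          · have h2 : y = x₀ - δ := le_antisymm hl hyI.1
            rw [h2]
            rw [show x₀ - δ - x₀ = -δ by ring, abs_neg]
            exact abs_of_nonneg hδpos.le
        have hR1 := hRl y hyI
        rw [habs] at hR1
        have hsq : (y - x₀)^2 = δ^2 := by rw [← sq_abs, habs]
        have hcδ : c*δ^2 = 2*ε*δ := by
          rw [hcdef]
          field_simp
        have hmx := hymin x₀ hx₀I
        simp only [sub_self] at hmx
        have hεδ : 0 < ε*δ := mul_pos hεpos hδpos
        nlinarith [hmx, hR1, hsq, hcδ]
      have hrkpos : 0 < δ - |y - x₀| := by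
        have : |y - x₀| < δ := abs_lt.mpr ⟨by linarith [hyIoo.1], by linarith [hyIoo.2]⟩
        linarith
      have ha1 : x₀ - y ≤ |y - x₀| := by rw [abs_sub_comm]; exact le_abs_self _
      have ha2 : y - x₀ ≤ |y - x₀| := le_abs_self _
      have hsubIcc : Set.Icc (y - (δ - |y - x₀|)) (y + (δ - |y - x₀|))
          ⊆ Set.Icc (x₀ - δ) (x₀ + δ) := by
        intro x hx
        constructor
        · linarith [hx.1]
        · linarith [hx.2]
      have hsubk : Set.Icc (y - (δ - |y - x₀|)) (y + (δ - |y - x₀|)) ⊆ Set.Ioo (0:ℝ) 1 :=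
        fun x hx => (hin x (hsubIcc hx)).2
      have hA : ∀ x : ℝ, HasDerivAt (fun z => z - x₀) 1 x :=
        fun x => (hasDerivAt_id x).sub_const x₀
      have hB : ∀ x : ℝ, HasDerivAt (fun z => z - y) 1 x :=
        fun x => (hasDerivAt_id x).sub_const y
      have hφg : ∀ x, HasDerivAt (fun z => p*(z - x₀) - c*(z - x₀)^2 - (z - y)^2)
          (p - 2*c*(x - x₀) - 2*(x - y)) x := by
        intro x
        have h1 := ((hA x).const_mul p).sub (((hA x).pow 2).const_mul c)
        have h2 := h1.sub ((hB x).pow 2)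
        exact h2.congr_deriv (by ring)
      have hgg' : ∀ x, HasDerivAt (fun z => p - 2*c*(z - x₀) - 2*(z - y)) (-(2*c) - 2) x := by
        intro x
        have h1 := (((hA x).const_mul (2*c)).add ((hB x).const_mul 2)).neg.const_add p
        have he : (fun z => p - 2*c*(z - x₀) - 2*(z - y))
            = (fun z => p + -(2*c*(z - x₀) + 2*(z - y))) := by
          funext z
          ring
        rw [he]
        exact h1.congr_deriv (by ring)
      have hstrictk : ∀ x ∈ Set.Icc (y - (δ - |y - x₀|)) (y + (δ - |y - x₀|)), x ≠ y →
          R y - (p*(y - x₀) - c*(y - x₀)^2 - (y - y)^2)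
            < R x - (p*(x - x₀) - c*(x - x₀)^2 - (x - y)^2) := by
        intro x hx hxy
        have h1 := hymin x (hsubIcc hx)
        have h2 : 0 < (x - y)^2 := pow_two_pos_of_ne_zero (sub_ne_zero.mpr hxy)
        nlinarith [h1, h2]
      obtain ⟨i, hi⟩ := fp_smooth_min hψ hν hσs hσs0 hn hR hconv hφg hgg'
        continuous_const hrkpos hsubk hstrictk
      refine ⟨y, p - 2*c*(y - x₀), i, ?_, ?_, ?_⟩
      · have : |y - x₀| < δ := abs_lt.mpr ⟨by linarith [hyIoo.1], by linarith [hyIoo.2]⟩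
        show |y - x₀| ≤ ε
        linarith
      · rw [show p - 2*c*(y - x₀) - p = -(2*c*(y - x₀)) by ring, abs_neg, abs_mul,
          abs_of_pos (by positivity : (0:ℝ) < 2*c)]
        have h1 : |y - x₀| ≤ δ := by
          have : |y - x₀| < δ := abs_lt.mpr ⟨by linarith [hyIoo.1], by linarith [hyIoo.2]⟩
          linarith
        have h2 : 2*c*|y - x₀| ≤ 2*c*δ := by nlinarith
        have h3 : 2*c*δ = 4*ε := by
          rw [hcdef]
          field_simp
          ring
        rw [show (4:ℝ)/((k:ℝ)+1) = 4*ε by rw [hεdef]; ring]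
        linarith
      · have hq : p - 2*c*(y - x₀) - 2*(y - y) = p - 2*c*(y - x₀) := by ring
        rwa [hq] at hi
    choose ys qs is hys hqs hineq using hstep
    obtain ⟨i, sub, hsubmono, hsubi⟩ := fp_exists_const_subseq is
    have hsubtop : Tendsto sub atTop atTop := hsubmono.tendsto_atTop
    have hy_lim : Tendsto (fun k => ys (sub k)) atTop (nhds x₀) := by
      have h1 : Tendsto (fun k => ys k - x₀) atTop (nhds 0) :=
        squeeze_zero_norm (fun k => by simpa [Real.norm_eq_abs] using hys k) h0lim
      have h2 := (h1.add_const x₀)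
      have h3 : Tendsto ys atTop (nhds x₀) := by simpa using h2
      exact h3.comp hsubtop
    have hq_lim : Tendsto (fun k => qs (sub k)) atTop (nhds p) := by
      have h0' : Tendsto (fun k : ℕ => 4/((k:ℝ)+1)) atTop (nhds 0) := by
        have := h0lim.const_mul (4:ℝ)
        simpa [mul_one_div, div_eq_mul_inv] using this
      have h1 : Tendsto (fun k => qs k - p) atTop (nhds 0) :=
        squeeze_zero_norm (fun k => by simpa [Real.norm_eq_abs] using hqs k) h0'
      have h2 := h1.add_const p
      have h3 : Tendsto qs atTop (nhds p) := by simpa using h2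
      exact h3.comp hsubtop
    have claim : deriv (ψ i) x₀ * p ≤ p^2 := by
      have L1 : Tendsto (fun k => (qs (sub k))^2) atTop (nhds (p^2)) := hq_lim.pow 2
      have L2 : Tendsto (fun k => deriv (ψ i) (ys (sub k)) * qs (sub k)) atTop
          (nhds (deriv (ψ i) x₀ * p)) :=
        (((hψ1c i).tendsto x₀).comp hy_lim).mul hq_lim
      refine le_of_tendsto_of_tendsto L2 L1 (Filter.Eventually.of_forall (fun k => ?_))
      have := hineq (sub k)
      rwa [hsubi k] at this
    have hb : BddAbove (Set.range fun i => -deriv (ψ i) x₀ * p) :=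
      (Set.finite_range _).bddAbove
    have h1 : -deriv (ψ i) x₀ * p ≤ ⨆ j, -deriv (ψ j) x₀ * p := le_ciSup hb i
    linarith
end
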